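/- arXiv:1801.06169 — 4 statements merged into one kernel-verified Lean document; each statement's English description precedes it below -/
import Mathlib

section
/- The number of 4-cycles in the complete bipartite graph K_{ℓ,m} equals C(ℓ,2)·C(m,2), and C(e-d+2, 2) − C(ℓ,2)·C(m,2) = (ℓ-1)(ℓ-2)(m-1)(m-2)/4 ≥ 0, where d = ℓ+m and e = ℓm. Equality C(e-d+2,2) = c_4(K_{ℓ,m}) holds if and only if ℓ ≤ 2 or m ≤ 2. -/
open SimpleGraph

variable {V : Type*}

section Aux

lemma edge_count_bip (l m : ℕ) :
    Nat.card (completeBipartiteGraph (Fin l) (Fin m)).edgeSet = l * m := by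
  have hb : Function.Bijective (fun p : Fin l × Fin m =>
      (⟨s(Sum.inl p.1, Sum.inr p.2), by simp⟩ :
        (completeBipartiteGraph (Fin l) (Fin m)).edgeSet)) := by
    constructor
    · rintro ⟨a, b⟩ ⟨a', b'⟩ h
      simp only [Subtype.mk.injEq, Sym2.eq, Sym2.rel_iff', Prod.mk.injEq,
        Sum.inl.injEq, Sum.inr.injEq, Prod.swap_prod_mk] at h
      rcases h with ⟨h1, h2⟩ | ⟨h1, h2⟩
      · simp_all
      · simp_all
    · rintro ⟨e, he⟩
      induction e using Sym2.ind with
      | _ x y =>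
        rw [SimpleGraph.mem_edgeSet, completeBipartiteGraph_adj] at he
        rcases x with a | a <;> rcases y with b | b <;> simp at he
        · exact ⟨(a, b), rfl⟩
        · exact ⟨(b, a), by simp [Sym2.eq_swap]⟩
  rw [← Nat.card_eq_of_bijective _ hb]
  simp

abbrev bipS (l m : ℕ) := {p : (Fin l ⊕ Fin m) × (Fin l ⊕ Fin m) × (Fin l ⊕ Fin m) × (Fin l ⊕ Fin m) //
    (completeBipartiteGraph (Fin l) (Fin m)).Adj p.1 p.2.1 ∧
    (completeBipartiteGraph (Fin l) (Fin m)).Adj p.2.1 p.2.2.1 ∧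
    (completeBipartiteGraph (Fin l) (Fin m)).Adj p.2.2.1 p.2.2.2 ∧
    (completeBipartiteGraph (Fin l) (Fin m)).Adj p.2.2.2 p.1 ∧
    p.1 ≠ p.2.2.1 ∧ p.2.1 ≠ p.2.2.2}

lemma card_ne_pairs (l : ℕ) : Nat.card {p : Fin l × Fin l // p.1 ≠ p.2} = l * l - l := by
  have e : {p : Fin l × Fin l // p.1 = p.2} ≃ Fin l :=
    ⟨fun p => p.1.1, fun a => ⟨(a, a), rfl⟩,
      by rintro ⟨⟨a, b⟩, h⟩; cases h; rfl, fun a => rfl⟩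
  rw [Nat.card_eq_fintype_card, Fintype.card_subtype_compl, Fintype.card_congr e]
  simp

lemma card_bipS (l m : ℕ) :
    Nat.card (bipS l m) = 2 * ((l * l - l) * (m * m - m)) := by
  classical
  set f : Bool × {p : Fin l × Fin l // p.1 ≠ p.2} × {q : Fin m × Fin m // q.1 ≠ q.2} → bipS l m :=
    fun x => if x.1 then
      ⟨(Sum.inr x.2.2.1.1, Sum.inl x.2.1.1.1, Sum.inr x.2.2.1.2, Sum.inl x.2.1.1.2),
        by simp [x.2.1.2, x.2.2.2]⟩
    else
      ⟨(Sum.inl x.2.1.1.1, Sum.inr x.2.2.1.1, Sum.inl x.2.1.1.2, Sum.inr x.2.2.1.2),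
        by simp [x.2.1.2, x.2.2.2]⟩ with hf
  have hb : Function.Bijective f := by
    constructor
    · rintro ⟨b1, ⟨⟨a1, c1⟩, h1⟩, ⟨⟨b1', d1⟩, h1'⟩⟩ ⟨b2, ⟨⟨a2, c2⟩, h2⟩, ⟨⟨b2', d2⟩, h2'⟩⟩ h
      cases b1 <;> cases b2 <;> simp [hf, Subtype.ext_iff] at h <;> simp_all
    · rintro ⟨⟨w, x, y, z⟩, h1, h2, h3, h4, h5, h6⟩
      rcases w with a | a
      · rcases x with b | b
        · simp at h1
        rcases y with c | c
        swap
        · simp at h2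
        rcases z with d | d
        · simp at h3
        refine ⟨(false, ⟨(a, c), by simpa using h5⟩, ⟨(b, d), by simpa using h6⟩), ?_⟩
        simp [hf]
      · rcases x with b | b
        swap
        · simp at h1
        rcases y with c | c
        · simp at h2
        rcases z with d | d
        swap
        · simp at h3
        refine ⟨(true, ⟨(b, d), by simpa using h6⟩, ⟨(a, c), by simpa using h5⟩), ?_⟩
        simp [hf]
  rw [← Nat.card_eq_of_bijective _ hb, Nat.card_prod, Nat.card_prod,
    card_ne_pairs, card_ne_pairs, Nat.card_eq_fintype_card]
  simp [mul_assoc]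

end Aux

/-- Number of 4-cycle subgraphs of `G`: each 4-cycle corresponds to 8 ordered
tuples `(a,b,c,d)` of vertices with `a~b~c~d~a` and `a ≠ c`, `b ≠ d`. -/
noncomputable def c4 (G : SimpleGraph V) : ℕ :=
  Nat.card {p : V × V × V × V //
    G.Adj p.1 p.2.1 ∧ G.Adj p.2.1 p.2.2.1 ∧ G.Adj p.2.2.1 p.2.2.2 ∧ G.Adj p.2.2.2 p.1 ∧
    p.1 ≠ p.2.2.1 ∧ p.2.1 ≠ p.2.2.2} / 8

/-- Number of `K₄` subgraphs of `G`, i.e. of 4-element cliques. -/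
noncomputable def k4 (G : SimpleGraph V) : ℕ :=
  Nat.card {s : Finset V // G.IsNClique 4 s}

/-- Number of edges of `G`. -/
noncomputable def edgeCount (G : SimpleGraph V) : ℕ := Nat.card G.edgeSet

/-- Degree of the vertex `v` in `G`. -/
noncomputable def deg (G : SimpleGraph V) (v : V) : ℕ := Nat.card (G.neighborSet v)

/-- Minimum degree of `G`. -/
noncomputable def minDeg (G : SimpleGraph V) : ℕ := sInf (Set.range (deg G))

/-- Maximum degree of `G`. -/
noncomputable def maxDeg (G : SimpleGraph V) : ℕ := sSup (Set.range (deg G))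

/-- Clique number of `G`. -/
noncomputable def cliqueNum (G : SimpleGraph V) : ℕ :=
  sSup {n | ∃ s : Finset V, G.IsNClique n s}

/-- `G` has at least one odd cycle. -/
def HasOddCycle (G : SimpleGraph V) : Prop :=
  ∃ (v : V) (w : G.Walk v v), w.IsCycle ∧ Odd w.length

/-- Number of triangles of `G` containing both vertices `i` and `j`
(for an edge `{i,j}`, the number of common neighbors of `i` and `j`). -/
noncomputable def c3edge (G : SimpleGraph V) (i j : V) : ℕ :=
  Nat.card {k : V // G.Adj i k ∧ G.Adj j k}

/-- Number of 4-cycles of `G` containing the edge `{i,j}`: such a cycle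
`i - j - k - l - i` is determined by the ordered pair `(k,l)`. -/
noncomputable def c4edge (G : SimpleGraph V) (i j : V) : ℕ :=
  Nat.card {p : V × V // G.Adj j p.1 ∧ G.Adj p.1 p.2 ∧ G.Adj p.2 i ∧ p.1 ≠ i ∧ p.2 ≠ j}

/-- Number of 4-cycles of `G` passing through the vertex `v`. -/
noncomputable def c4vertex (G : SimpleGraph V) (v : V) : ℕ :=
  Nat.card {p : V × V × V // G.Adj v p.1 ∧ G.Adj p.1 p.2.1 ∧ G.Adj p.2.1 p.2.2 ∧
    G.Adj p.2.2 v ∧ p.1 ≠ p.2.2 ∧ v ≠ p.2.1} / 2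

/-- `c₄(K_{ℓ,m}) = C(ℓ,2)·C(m,2)`, and
`C(e-d+2,2) − C(ℓ,2)·C(m,2) = (ℓ-1)(ℓ-2)(m-1)(m-2)/4 ≥ 0`, where `d = ℓ+m`,
`e = ℓm`; equality `C(e-d+2,2) = c₄(K_{ℓ,m})` holds iff `ℓ ≤ 2` or `m ≤ 2`. -/
theorem c4_completeBipartiteGraph (l m : ℕ) (hl : 1 ≤ l) (hm : 1 ≤ m) :
    edgeCount (completeBipartiteGraph (Fin l) (Fin m)) = l * m ∧
    c4 (completeBipartiteGraph (Fin l) (Fin m)) = Nat.choose l 2 * Nat.choose m 2 ∧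
    (Nat.choose (l * m + 2 - (l + m)) 2 : ℚ) - Nat.choose l 2 * Nat.choose m 2 =
      ((l : ℚ) - 1) * ((l : ℚ) - 2) * ((m : ℚ) - 1) * ((m : ℚ) - 2) / 4 ∧
    0 ≤ ((l : ℚ) - 1) * ((l : ℚ) - 2) * ((m : ℚ) - 1) * ((m : ℚ) - 2) / 4 ∧
    (Nat.choose (l * m + 2 - (l + m)) 2 = c4 (completeBipartiteGraph (Fin l) (Fin m)) ↔
      l ≤ 2 ∨ m ≤ 2) := by
  classical
  have hE := edge_count_bip l m
  -- evenness helpers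
  have hmul : ∀ n : ℕ, n * (n - 1) = n * n - n := fun n => by rw [Nat.mul_sub, mul_one]
  have heven : ∀ n : ℕ, ∃ a, n * n - n = a + a := by
    intro n
    have : Even (n * (n - 1)) := by
      rcases Nat.even_or_odd n with h | h
      · exact h.mul_right _
      · exact (Nat.Odd.sub_odd h odd_one).mul_left _
    rw [hmul n] at this
    exact this
  obtain ⟨a, ha⟩ := heven l
  obtain ⟨b, hb⟩ := heven m
  have hca : l.choose 2 = a := by rw [Nat.choose_two_right, hmul, ha]; omega
  have hcb : m.choose 2 = b := by rw [Nat.choose_two_right, hmul, hb]; omega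
  have h2 : c4 (completeBipartiteGraph (Fin l) (Fin m)) = Nat.choose l 2 * Nat.choose m 2 := by
    show Nat.card (bipS l m) / 8 = _
    rw [card_bipS, ha, hb, hca, hcb]
    have h8 : 2 * ((a + a) * (b + b)) = a * b * 8 := by ring
    rw [h8, Nat.mul_div_cancel _ (by norm_num)]
  have hk : l + m ≤ l * m + 2 := by
    obtain ⟨a', rfl⟩ : ∃ a', l = a' + 1 := ⟨l - 1, by omega⟩
    obtain ⟨b', rfl⟩ : ∃ b', m = b' + 1 := ⟨m - 1, by omega⟩
    nlinarith [Nat.zero_le (a' * b')]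
  have h3 : (Nat.choose (l * m + 2 - (l + m)) 2 : ℚ) - Nat.choose l 2 * Nat.choose m 2 =
      ((l : ℚ) - 1) * ((l : ℚ) - 2) * ((m : ℚ) - 1) * ((m : ℚ) - 2) / 4 := by
    rw [Nat.cast_choose_two, Nat.cast_choose_two, Nat.cast_choose_two]
    push_cast [Nat.cast_sub hk]
    ring
  have hl1 : (1 : ℚ) ≤ (l : ℚ) := by exact_mod_cast hl
  have hm1 : (1 : ℚ) ≤ (m : ℚ) := by exact_mod_cast hm
  have hfac : ∀ n : ℕ, 1 ≤ n → 0 ≤ ((n : ℚ) - 1) * ((n : ℚ) - 2) := by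
    intro n hn
    rcases Nat.lt_or_ge n 2 with h | h
    · have : n = 1 := by omega
      subst this; norm_num
    · have h2' : (2 : ℚ) ≤ (n : ℚ) := by exact_mod_cast h
      nlinarith
  have h4 : 0 ≤ ((l : ℚ) - 1) * ((l : ℚ) - 2) * ((m : ℚ) - 1) * ((m : ℚ) - 2) / 4 := by
    have := mul_nonneg (hfac l hl) (hfac m hm)
    nlinarith [hfac l hl, hfac m hm]
  refine ⟨hE, h2, h3, h4, ?_⟩
  rw [h2]
  have key : (Nat.choose (l * m + 2 - (l + m)) 2 = l.choose 2 * m.choose 2) ↔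
      ((l : ℚ) - 1) * ((l : ℚ) - 2) * ((m : ℚ) - 1) * ((m : ℚ) - 2) = 0 := by
    constructor
    · intro h
      have hq : (Nat.choose (l * m + 2 - (l + m)) 2 : ℚ) = (l.choose 2 : ℚ) * (m.choose 2 : ℚ) := by
        exact_mod_cast congrArg (Nat.cast : ℕ → ℚ) h
      rw [hq] at h3
      linarith
    · intro h
      have hq : (Nat.choose (l * m + 2 - (l + m)) 2 : ℚ) = ((l.choose 2 * m.choose 2 : ℕ) : ℚ) := by
        push_cast
        linarith [h3, h]
      exact_mod_cast hq
  rw [key]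
  constructor
  · intro h
    by_contra hc
    push_neg at hc
    obtain ⟨hl3, hm3⟩ := hc
    have hl3' : (3 : ℚ) ≤ (l : ℚ) := by exact_mod_cast hl3
    have hm3' : (3 : ℚ) ≤ (m : ℚ) := by exact_mod_cast hm3
    have p := mul_pos (mul_pos (mul_pos
      (by linarith : (0:ℚ) < (l:ℚ) - 1) (by linarith : (0:ℚ) < (l:ℚ) - 2))
      (by linarith : (0:ℚ) < (m:ℚ) - 1)) (by linarith : (0:ℚ) < (m:ℚ) - 2)
    linarith
  · intro h
    rcases h with h | h
    · interval_cases l <;> norm_num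
    · interval_cases m <;> norm_num
end

section
/- If G is a connected graph with d vertices and e edges containing at least one K_4, then c_4(G) < e(e-d)/4 + (3/2)·k_4(G). -/
open SimpleGraph

variable {V : Type*}

open SimpleGraph Finset

namespace C4aux

set_option linter.unusedSectionVars false

variable {V : Type*} [Fintype V] [DecidableEq V] (G : SimpleGraph V) [DecidableRel G.Adj]

/-- single-edge indicator vector in the GF(2) edge space -/
def chi (w : Sym2 V) : ↥G.edgeFinset → ZMod 2 := fun e => if (e : Sym2 V) = w then 1 else 0

/-- vertex delta function -/
def dl (a : V) : V → ZMod 2 := fun v => if v = a then 1 else 0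

lemma addself (f : V → ZMod 2) : f + f = 0 := by
  funext v
  have : ∀ x : ZMod 2, x + x = 0 := by decide
  simpa using this (f v)

/-- boundary map -/
def bd : (↥G.edgeFinset → ZMod 2) →ₗ[ZMod 2] (V → ZMod 2) where
  toFun x := fun v => ∑ e : ↥G.edgeFinset, x e * (if v ∈ (e : Sym2 V) then 1 else 0)
  map_add' x y := by
    funext v
    simp only [Pi.add_apply, add_mul, Finset.sum_add_distrib]
  map_smul' c x := by
    funext v
    simp [Finset.mul_sum, mul_assoc]

lemma bd_chi {w : Sym2 V} (hw : w ∈ G.edgeFinset) :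
    bd G (chi G w) = fun v => if v ∈ w then 1 else 0 := by
  funext v
  show (∑ e : ↥G.edgeFinset, (if (e : Sym2 V) = w then (1:ZMod 2) else 0) *
      (if v ∈ (e : Sym2 V) then 1 else 0)) = _
  rw [Fintype.sum_eq_single (⟨w, hw⟩ : ↥G.edgeFinset)]
  · simp
  · intro e he
    have : (e : Sym2 V) ≠ w := fun h => he (Subtype.ext h)
    simp [this]

lemma ind_pair {a b : V} (hab : a ≠ b) :
    (fun v => if v ∈ (s(a,b) : Sym2 V) then (1:ZMod 2) else 0) = dl a + dl b := by
  funext v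
  simp only [Sym2.mem_iff, Pi.add_apply, dl]
  by_cases h1 : v = a <;> by_cases h2 : v = b
  · exact absurd (h1 ▸ h2) hab
  · simp only [h1, h2]; simp [hab]
  · simp only [h1, h2]; simp [Ne.symm hab]
  · simp [h1, h2]


/-- vector of a walk (sum of edge indicators, with multiplicity mod 2) -/
def wvec : {x y : V} → G.Walk x y → (↥G.edgeFinset → ZMod 2)
  | _, _, SimpleGraph.Walk.nil => 0
  | x, _, @SimpleGraph.Walk.cons _ _ _ z _ h p => chi G s(x, z) + wvec p

lemma bd_wvec {x y : V} (p : G.Walk x y) : bd G (wvec G p) = dl x + dl y := by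
  induction p with
  | nil =>
    rw [wvec, map_zero]
    exact (addself (dl _)).symm
  | cons h p ih =>
    rename_i a b c
    rw [wvec, map_add, ih, bd_chi G (by simpa [SimpleGraph.mem_edgeFinset] using h),
      ind_pair h.ne]
    funext v
    have : ∀ x : ZMod 2, x + x = 0 := by decide
    simp only [Pi.add_apply]
    have h2 : dl a v + dl b v + (dl b v + dl c v) = (dl b v + dl b v) + (dl a v + dl c v) := by ring
    rw [h2, this (dl b v), zero_add]


/-- ordered pairs completing an edge (u,v) to a 4-cycle u-v-c-d-u -/
def pairsF (u v : V) : Finset (V × V) :=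
  univ.filter fun p => G.Adj v p.1 ∧ G.Adj p.1 p.2 ∧ G.Adj p.2 u ∧ p.1 ≠ u ∧ p.2 ≠ v

/-- partner edges of the edge (u,v) -/
def pset (u v : V) : Finset (Sym2 V) := (pairsF G u v).image Sym2.mk.uncurry

/-- apexes of triangles over the edge (u,v) -/
def aset (u v : V) : Finset V := univ.filter fun m => G.Adj u m ∧ G.Adj v m

lemma pset_spec {u v : V} {w : Sym2 V} (hw : w ∈ pset G u v) :
    ∃ c d : V, G.Adj v c ∧ G.Adj c d ∧ G.Adj d u ∧ c ≠ u ∧ d ≠ v ∧ s(c,d) = w := by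
  obtain ⟨⟨c, d⟩, hp, hmk⟩ := Finset.mem_image.mp hw
  rw [pairsF, Finset.mem_filter] at hp
  exact ⟨c, d, hp.2.1, hp.2.2.1, hp.2.2.2.1, hp.2.2.2.2.1, hp.2.2.2.2.2, hmk⟩

lemma pset_not_mem_left {u v : V} {w : Sym2 V} (hw : w ∈ pset G u v) : u ∉ w := by
  obtain ⟨c, d, h1, h2, h3, h4, h5, h6⟩ := pset_spec G hw
  rw [← h6, Sym2.mem_iff]
  rintro (rfl | rfl)
  · exact h4 rfl
  · exact h3.ne rfl

lemma pset_not_mem_right {u v : V} {w : Sym2 V} (hw : w ∈ pset G u v) : v ∉ w := by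
  obtain ⟨c, d, h1, h2, h3, h4, h5, h6⟩ := pset_spec G hw
  rw [← h6, Sym2.mem_iff]
  rintro (rfl | rfl)
  · exact h1.ne rfl
  · exact h5 rfl

lemma pset_mem_edge {u v : V} {w : Sym2 V} (hw : w ∈ pset G u v) : w ∈ G.edgeFinset := by
  obtain ⟨c, d, h1, h2, h3, h4, h5, h6⟩ := pset_spec G hw
  rw [← h6]
  simpa [SimpleGraph.mem_edgeFinset] using h2

/-- chosen orientation of a partner edge -/
noncomputable def orc {u v : V} {w : Sym2 V} (hw : w ∈ pset G u v) : V :=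
  (pset_spec G hw).choose

noncomputable def ord {u v : V} {w : Sym2 V} (hw : w ∈ pset G u v) : V :=
  (pset_spec G hw).choose_spec.choose

lemma or_spec {u v : V} {w : Sym2 V} (hw : w ∈ pset G u v) :
    G.Adj v (orc G hw) ∧ G.Adj (orc G hw) (ord G hw) ∧ G.Adj (ord G hw) u ∧
      orc G hw ≠ u ∧ ord G hw ≠ v ∧ s(orc G hw, ord G hw) = w :=
  (pset_spec G hw).choose_spec.choose_spec

/-- 4-cycle vector of a partner edge -/
noncomputable def cvec {u v : V} {w : Sym2 V} (hw : w ∈ pset G u v) :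
    ↥G.edgeFinset → ZMod 2 :=
  chi G s(u,v) + chi G s(v, orc G hw) + chi G s(orc G hw, ord G hw) + chi G s(ord G hw, u)

/-- triangle vector over the edge (u,v) with apex m -/
def tvec (u v m : V) : ↥G.edgeFinset → ZMod 2 :=
  chi G s(u,v) + chi G s(u,m) + chi G s(v,m)

lemma bd_tri {a b c : V} (hab : G.Adj a b) (hbc : G.Adj b c) (hac : G.Adj a c) :
    bd G (chi G s(a,b) + chi G s(a,c) + chi G s(b,c)) = 0 := by
  rw [map_add, map_add, bd_chi G (by simpa [SimpleGraph.mem_edgeFinset] using hab),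
    bd_chi G (by simpa [SimpleGraph.mem_edgeFinset] using hac),
    bd_chi G (by simpa [SimpleGraph.mem_edgeFinset] using hbc),
    ind_pair hab.ne, ind_pair hac.ne, ind_pair hbc.ne]
  funext v
  have h2 : ∀ x : ZMod 2, x + x = 0 := by decide
  simp only [Pi.add_apply, Pi.zero_apply]
  have : dl a v + dl b v + (dl a v + dl c v) + (dl b v + dl c v) =
      (dl a v + dl a v) + ((dl b v + dl b v) + (dl c v + dl c v)) := by ring
  rw [this, h2, h2, h2, zero_add, zero_add]

lemma bd_tvec {u v m : V} (huv : G.Adj u v) (hum : G.Adj u m) (hvm : G.Adj v m) :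
    bd G (tvec G u v m) = 0 := bd_tri G huv hvm hum

lemma bd_cvec {u v : V} (huv : G.Adj u v) {w : Sym2 V} (hw : w ∈ pset G u v) :
    bd G (cvec G hw) = 0 := by
  obtain ⟨h1, h2, h3, h4, h5, h6⟩ := or_spec G hw
  rw [cvec, map_add, map_add, map_add,
    bd_chi G (by simpa [SimpleGraph.mem_edgeFinset] using huv),
    bd_chi G (by simpa [SimpleGraph.mem_edgeFinset] using h1),
    bd_chi G (by simpa [SimpleGraph.mem_edgeFinset] using h2),
    bd_chi G (by simpa [SimpleGraph.mem_edgeFinset] using h3),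
    ind_pair huv.ne, ind_pair h1.ne, ind_pair h2.ne, ind_pair h3.ne]
  funext t
  have hh : ∀ x : ZMod 2, x + x = 0 := by decide
  simp only [Pi.add_apply, Pi.zero_apply]
  set a := dl u t; set b := dl v t; set c := dl (orc G hw) t; set d := dl (ord G hw) t
  have : a + b + (b + c) + (c + d) + (d + a) = (a+a) + ((b+b) + ((c+c) + (d+d))) := by ring
  rw [this, hh, hh, hh, hh, zero_add, zero_add, zero_add]


lemma ne_of_not_mem {j w : Sym2 V} {a : V} (ha : a ∈ w) (h : a ∉ j) : j ≠ w :=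
  fun e => h (e ▸ ha)

lemma aset_spec {u v m : V} (hm : m ∈ aset G u v) : G.Adj u m ∧ G.Adj v m := by
  simpa [aset] using hm

lemma chi_apply (w : Sym2 V) (e : ↥G.edgeFinset) :
    chi G w e = if (e : Sym2 V) = w then 1 else 0 := rfl

lemma cvec_coord {u v : V} {w : Sym2 V} (hw : w ∈ pset G u v) {j : Sym2 V}
    (hj : j ∈ G.edgeFinset) (hju : u ∉ j) (hjv : v ∉ j) :
    cvec G hw ⟨j, hj⟩ = if j = w then 1 else 0 := by
  obtain ⟨h1, h2, h3, h4, h5, h6⟩ := or_spec G hw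
  simp only [cvec, Pi.add_apply, chi_apply]
  rw [if_neg (ne_of_not_mem (Sym2.mem_mk_left u v) hju),
    if_neg (ne_of_not_mem (Sym2.mem_mk_left v (orc G hw)) hjv),
    if_neg (ne_of_not_mem (Sym2.mem_mk_right (ord G hw) u) hju), h6]
  simp

lemma cvec_coord_uv {u v : V} (huv : G.Adj u v) {w : Sym2 V} (hw : w ∈ pset G u v)
    (he : s(u,v) ∈ G.edgeFinset) :
    cvec G hw ⟨s(u,v), he⟩ = 1 := by
  obtain ⟨h1, h2, h3, h4, h5, h6⟩ := or_spec G hw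
  have n2 : s(u,v) ≠ s(v, orc G hw) := by
    rw [Ne, Sym2.eq_iff]; push_neg
    exact ⟨fun e => absurd e huv.ne, fun e => absurd e.symm h4⟩
  have n3 : s(u,v) ≠ s(orc G hw, ord G hw) := by
    rw [h6]; exact fun e => pset_not_mem_left G hw (e ▸ Sym2.mem_mk_left u v)
  have n4 : s(u,v) ≠ s(ord G hw, u) := by
    rw [Ne, Sym2.eq_iff]; push_neg
    exact ⟨fun _ e => huv.ne e.symm, fun _ e => h5 e.symm⟩
  simp only [cvec, Pi.add_apply, chi_apply]
  simp [n2, n3, n4]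

lemma tvec_coord_far {u v m : V} {j : Sym2 V} (hj : j ∈ G.edgeFinset)
    (hju : u ∉ j) (hjv : v ∉ j) : tvec G u v m ⟨j, hj⟩ = 0 := by
  simp only [tvec, Pi.add_apply, chi_apply]
  rw [if_neg (ne_of_not_mem (Sym2.mem_mk_left u v) hju),
    if_neg (ne_of_not_mem (Sym2.mem_mk_left u m) hju),
    if_neg (ne_of_not_mem (Sym2.mem_mk_left v m) hjv)]
  simp

lemma tvec_coord_um {u v m m' : V} (huv : G.Adj u v) (hm : m ∈ aset G u v)
    (hm' : m' ∈ aset G u v) (he : s(u,m') ∈ G.edgeFinset) :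
    tvec G u v m ⟨s(u,m'), he⟩ = if m = m' then 1 else 0 := by
  obtain ⟨hum, hvm⟩ := aset_spec G hm
  obtain ⟨hum', hvm'⟩ := aset_spec G hm'
  have n1 : s(u,m') ≠ s(u,v) := by
    rw [Ne, Sym2.eq_iff]; push_neg
    exact ⟨fun _ => hvm'.ne', fun e => absurd e huv.ne⟩
  have n3 : s(u,m') ≠ s(v,m) := by
    rw [Ne, Sym2.eq_iff]; push_neg
    exact ⟨fun e => absurd e huv.ne, fun e => absurd e hum.ne⟩
  simp only [tvec, Pi.add_apply, chi_apply]
  by_cases hmm : m = m'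
  · subst hmm; simp [n1, n3]
  · have n2 : s(u,m') ≠ s(u,m) := by
      rw [Ne, Sym2.eq_iff]; push_neg
      exact ⟨fun _ e => hmm e.symm, fun e => absurd e hum.ne⟩
    simp [n1, n2, n3, hmm]

/-- extra triangle vector -/
def t1vec (x y z : V) : ↥G.edgeFinset → ZMod 2 :=
  chi G s(x,y) + chi G s(x,z) + chi G s(y,z)

lemma t1vec_far {x y z : V} {j : Sym2 V} (hj : j ∈ G.edgeFinset)
    (hx : x ∉ j) (hy : y ∉ j) : t1vec G x y z ⟨j, hj⟩ = 0 := by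
  simp only [t1vec, Pi.add_apply, chi_apply]
  rw [if_neg (ne_of_not_mem (Sym2.mem_mk_left x y) hx),
    if_neg (ne_of_not_mem (Sym2.mem_mk_left x z) hx),
    if_neg (ne_of_not_mem (Sym2.mem_mk_left y z) hy)]
  simp

lemma t1vec_coord {x y z : V} (hxy : x ≠ y) (hxz : x ≠ z) (hyz : y ≠ z) {j : Sym2 V}
    (hj : j ∈ G.edgeFinset) (htri : j = s(x,y) ∨ j = s(x,z) ∨ j = s(y,z)) :
    t1vec G x y z ⟨j, hj⟩ = 1 := by
  have n1 : s(x,y) ≠ s(x,z) := by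
    rw [Ne, Sym2.eq_iff]; push_neg
    exact ⟨fun _ => hyz, fun e => absurd e hxz⟩
  have n2 : s(x,y) ≠ s(y,z) := by
    rw [Ne, Sym2.eq_iff]; push_neg
    exact ⟨fun e => absurd e hxy, fun e => absurd e hxz⟩
  have n3 : s(x,z) ≠ s(y,z) := by
    rw [Ne, Sym2.eq_iff]
    rintro (⟨e1, -⟩ | ⟨e1, -⟩)
    · exact hxy e1
    · exact hxz e1
  simp only [t1vec, Pi.add_apply, chi_apply]
  rcases htri with rfl | rfl | rfl
  · simp [n1, n2]
  · simp [n1.symm, n3]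
  · simp [n2.symm, n3.symm]

lemma sum_pick1 {α : Type*} [DecidableEq α] {s : Finset α} (g : ↥s → ZMod 2) {w : α}
    (hw : w ∈ s) :
    ∑ i : ↥s, g i * (if (↑i : α) = w then 1 else 0) = g ⟨w, hw⟩ := by
  rw [Fintype.sum_eq_single (⟨w, hw⟩ : ↥s)]
  · simp
  · intro i hi
    have : (↑i : α) ≠ w := fun h => hi (Subtype.ext h)
    simp [this]

lemma sum_pick2 {α : Type*} [DecidableEq α] {s : Finset α} (g : ↥s → ZMod 2) {w : α}
    (hw : w ∈ s) :
    ∑ i : ↥s, g i * (if w = (↑i : α) then 1 else 0) = g ⟨w, hw⟩ := by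
  rw [← sum_pick1 g hw]
  congr 1; funext i; congr 1
  by_cases h : (↑i : α) = w
  · simp [h]
  · simp [h, Ne.symm h]

lemma sum_ind1 {α : Type*} [DecidableEq α] (s : Finset α) (w : α) :
    ∑ i : ↥s, (if (↑i : α) = w then (1 : ZMod 2) else 0) = if w ∈ s then 1 else 0 := by
  by_cases hw : w ∈ s
  · rw [if_pos hw, Fintype.sum_eq_single (⟨w, hw⟩ : ↥s)]
    · simp
    · intro i hi
      have : (↑i : α) ≠ w := fun h => hi (Subtype.ext h)
      simp [this]
  · rw [if_neg hw, Finset.sum_eq_zero]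
    intro i _
    have : (↑i : α) ≠ w := fun h => hw (h ▸ i.2)
    simp [this]

/-- MAIN RANK LEMMA 1: partners + apexes + (d-1) ≤ e -/
lemma main1 (hconn : G.Connected) (u v : V) (huv : G.Adj u v) :
    (pset G u v).card + (aset G u v).card + (Fintype.card V - 1) ≤ G.edgeFinset.card := by
  have hedge : ∀ {a b : V}, G.Adj a b → s(a,b) ∈ G.edgeFinset := fun h => by
    simpa [SimpleGraph.mem_edgeFinset] using h
  let W : Finset V := univ.erase u
  let fam : ↥(pset G u v) ⊕ ↥(aset G u v) ⊕ ↥W → (↥G.edgeFinset → ZMod 2) :=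
    Sum.elim (fun i => cvec G i.2)
      (Sum.elim (fun m => tvec G u v ↑m)
        (fun x => wvec G (hconn.preconnected u ↑x).some))
  have hind : LinearIndependent (ZMod 2) fam := by
    rw [Fintype.linearIndependent_iff]
    intro g hg
    -- boundary kills walk coefficients
    have hbd : ∑ i, g i • bd G (fam i) = 0 := by
      have := congrArg (bd G) hg
      simpa [map_sum, map_smul] using this
    have hw0 : ∀ x : ↥W, g (Sum.inr (Sum.inr x)) = 0 := by
      intro x
      have hx := congrFun hbd (↑x : V)
      rw [Finset.sum_apply] at hx
      have hxu : (↑x : V) ≠ u := (Finset.mem_erase.mp x.2).1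
      unfold fam at hx
      rw [Fintype.sum_sum_type, Fintype.sum_sum_type] at hx
      simp only [Sum.elim_inl, Sum.elim_inr, Pi.zero_apply] at hx
      have e1 : ∀ i : ↥(pset G u v),
          (g (Sum.inl i) • bd G (cvec G i.2)) (↑x : V) = 0 := by
        intro i; rw [bd_cvec G huv i.2]; simp
      have e2 : ∀ m : ↥(aset G u v),
          (g (Sum.inr (Sum.inl m)) • bd G (tvec G u v ↑m)) (↑x : V) = 0 := by
        intro m
        obtain ⟨h1, h2⟩ := aset_spec G m.2
        rw [bd_tvec G huv h1 h2]; simp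
      rw [Finset.sum_congr rfl (fun i _ => e1 i), Finset.sum_congr rfl (fun m _ => e2 m)]
        at hx
      simp only [Finset.sum_const_zero, zero_add] at hx
      have e3 : ∀ y : ↥W,
          (g (Sum.inr (Sum.inr y)) • bd G (wvec G (hconn.preconnected u ↑y).some)) (↑x : V)
            = g (Sum.inr (Sum.inr y)) * (if (↑x : V) = (↑y : V) then 1 else 0) := by
        intro y
        rw [bd_wvec]
        simp only [Pi.smul_apply, Pi.add_apply, smul_eq_mul, dl]
        rw [if_neg hxu, zero_add]
      rw [Finset.sum_congr rfl (fun y _ => e3 y)] at hx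
      have := sum_pick2 (fun y : ↥W => g (Sum.inr (Sum.inr y))) x.2
      rw [this] at hx
      exact hx
    -- partner coefficients
    have hp0 : ∀ i : ↥(pset G u v), g (Sum.inl i) = 0 := by
      intro i
      have hiE : (↑i : Sym2 V) ∈ G.edgeFinset := pset_mem_edge G i.2
      have hx := congrFun hg (⟨↑i, hiE⟩ : ↥G.edgeFinset)
      unfold fam at hx
      rw [Finset.sum_apply, Pi.zero_apply, Fintype.sum_sum_type, Fintype.sum_sum_type] at hx
      simp only [Sum.elim_inl, Sum.elim_inr] at hx
      have e2 : ∀ m : ↥(aset G u v),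
          (g (Sum.inr (Sum.inl m)) • tvec G u v ↑m) ⟨↑i, hiE⟩ = 0 := by
        intro m
        rw [Pi.smul_apply, tvec_coord_far G hiE (pset_not_mem_left G i.2)
          (pset_not_mem_right G i.2)]
        simp
      have e3 : ∀ y : ↥W,
          (g (Sum.inr (Sum.inr y)) • wvec G (hconn.preconnected u ↑y).some) ⟨↑i, hiE⟩
            = 0 := by
        intro y; rw [hw0 y]; simp
      rw [Finset.sum_congr rfl (fun m _ => e2 m), Finset.sum_congr rfl (fun y _ => e3 y)]
        at hx
      simp only [Finset.sum_const_zero, add_zero] at hx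
      have e1 : ∀ j : ↥(pset G u v),
          (g (Sum.inl j) • cvec G j.2) ⟨↑i, hiE⟩
            = g (Sum.inl j) * (if (↑i : Sym2 V) = (↑j : Sym2 V) then 1 else 0) := by
        intro j
        rw [Pi.smul_apply, cvec_coord G j.2 hiE (pset_not_mem_left G i.2)
          (pset_not_mem_right G i.2), smul_eq_mul]
      rw [Finset.sum_congr rfl (fun j _ => e1 j)] at hx
      have := sum_pick2 (fun j : ↥(pset G u v) => g (Sum.inl j)) i.2
      rw [this] at hx
      exact hx
    -- apex coefficients
    have ha0 : ∀ m : ↥(aset G u v), g (Sum.inr (Sum.inl m)) = 0 := by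
      intro m
      have hadj : G.Adj u ↑m := (aset_spec G m.2).1
      have hiE : s(u, (↑m : V)) ∈ G.edgeFinset := hedge hadj
      have hx := congrFun hg (⟨s(u, (↑m : V)), hiE⟩ : ↥G.edgeFinset)
      unfold fam at hx
      rw [Finset.sum_apply, Pi.zero_apply, Fintype.sum_sum_type, Fintype.sum_sum_type] at hx
      simp only [Sum.elim_inl, Sum.elim_inr] at hx
      have e1 : ∀ j : ↥(pset G u v),
          (g (Sum.inl j) • cvec G j.2) ⟨s(u, (↑m : V)), hiE⟩ = 0 := by
        intro j; rw [hp0 j]; simp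
      have e3 : ∀ y : ↥W,
          (g (Sum.inr (Sum.inr y)) • wvec G (hconn.preconnected u ↑y).some)
            ⟨s(u, (↑m : V)), hiE⟩ = 0 := by
        intro y; rw [hw0 y]; simp
      rw [Finset.sum_congr rfl (fun j _ => e1 j), Finset.sum_congr rfl (fun y _ => e3 y)]
        at hx
      simp only [Finset.sum_const_zero, zero_add, add_zero] at hx
      have e2 : ∀ m' : ↥(aset G u v),
          (g (Sum.inr (Sum.inl m')) • tvec G u v ↑m') ⟨s(u, (↑m : V)), hiE⟩
            = g (Sum.inr (Sum.inl m')) * (if (↑m' : V) = (↑m : V) then 1 else 0) := by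
        intro m'
        rw [Pi.smul_apply, tvec_coord_um G huv m'.2 m.2 hiE, smul_eq_mul]
      rw [Finset.sum_congr rfl (fun m' _ => e2 m')] at hx
      have := sum_pick1 (fun m' : ↥(aset G u v) => g (Sum.inr (Sum.inl m'))) m.2
      rw [this] at hx
      exact hx
    rintro (i | m | x)
    · exact hp0 i
    · exact ha0 m
    · exact hw0 x
  have hcard := hind.fintype_card_le_finrank
  rw [Module.finrank_pi] at hcard
  simp only [Fintype.card_sum, Fintype.card_coe] at hcard
  have hW : W.card = Fintype.card V - 1 := by
    rw [Finset.card_erase_of_mem (Finset.mem_univ u), Finset.card_univ]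
  rw [hW] at hcard
  omega

/-- MAIN RANK LEMMA 2: for a triangle-free edge, partners + 1 + (d-1) ≤ e -/
lemma main2 (hconn : G.Connected) (u v : V) (huv : G.Adj u v) (x y z : V)
    (hxy : G.Adj x y) (hxz : G.Adj x z) (hyz : G.Adj y z)
    (hxu : x ≠ u) (hxv : x ≠ v) (hyu : y ≠ u) (hyv : y ≠ v) (hzu : z ≠ u) (hzv : z ≠ v)
    (hA : aset G u v = ∅) :
    (pset G u v).card + 1 + (Fintype.card V - 1) ≤ G.edgeFinset.card := by
  have hedge : ∀ {a b : V}, G.Adj a b → s(a,b) ∈ G.edgeFinset := fun h => by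
    simpa [SimpleGraph.mem_edgeFinset] using h
  have char2 : ∀ a c : ZMod 2, a + c = 0 → a = c := by decide
  let W : Finset V := univ.erase u
  let fam : ↥(pset G u v) ⊕ Unit ⊕ ↥W → (↥G.edgeFinset → ZMod 2) :=
    Sum.elim (fun i => cvec G i.2)
      (Sum.elim (fun _ => t1vec G x y z)
        (fun x => wvec G (hconn.preconnected u ↑x).some))
  have hind : LinearIndependent (ZMod 2) fam := by
    rw [Fintype.linearIndependent_iff]
    intro g hg
    have hbd : ∑ i, g i • bd G (fam i) = 0 := by
      have := congrArg (bd G) hg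
      simpa [map_sum, map_smul] using this
    have hw0 : ∀ x : ↥W, g (Sum.inr (Sum.inr x)) = 0 := by
      intro x0
      have hx := congrFun hbd (↑x0 : V)
      have hxu' : (↑x0 : V) ≠ u := (Finset.mem_erase.mp x0.2).1
      unfold fam at hx
      rw [Finset.sum_apply, Fintype.sum_sum_type, Fintype.sum_sum_type] at hx
      simp only [Sum.elim_inl, Sum.elim_inr, Pi.zero_apply] at hx
      have e1 : ∀ i : ↥(pset G u v),
          (g (Sum.inl i) • bd G (cvec G i.2)) (↑x0 : V) = 0 := by
        intro i; rw [bd_cvec G huv i.2]; simp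
      have e2 : ∀ t : Unit,
          (g (Sum.inr (Sum.inl t)) • bd G (t1vec G x y z)) (↑x0 : V) = 0 := by
        intro t; rw [t1vec, bd_tri G hxy hyz hxz]; simp
      have e3 : ∀ y0 : ↥W,
          (g (Sum.inr (Sum.inr y0)) • bd G (wvec G (hconn.preconnected u ↑y0).some)) (↑x0 : V)
            = g (Sum.inr (Sum.inr y0)) * (if (↑x0 : V) = (↑y0 : V) then 1 else 0) := by
        intro y0
        rw [bd_wvec]
        simp only [Pi.smul_apply, Pi.add_apply, smul_eq_mul, dl]
        rw [if_neg hxu', zero_add]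
      rw [Finset.sum_congr rfl (fun i _ => e1 i), Finset.sum_congr rfl (fun t _ => e2 t),
        Finset.sum_congr rfl (fun y0 _ => e3 y0)] at hx
      simp only [Finset.sum_const_zero, zero_add] at hx
      rw [sum_pick2 (fun y0 : ↥W => g (Sum.inr (Sum.inr y0))) x0.2] at hx
      exact hx
    set b := g (Sum.inr (Sum.inl ())) with hbdef
    -- key evaluation at any coordinate away from u,v
    have key : ∀ (j0 : Sym2 V) (hj0 : j0 ∈ G.edgeFinset), u ∉ j0 → v ∉ j0 →
        (∑ i : ↥(pset G u v), g (Sum.inl i) * (if j0 = (↑i : Sym2 V) then 1 else 0)) +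
          b * t1vec G x y z ⟨j0, hj0⟩ = 0 := by
      intro j0 hj0 hju hjv
      have hx := congrFun hg (⟨j0, hj0⟩ : ↥G.edgeFinset)
      unfold fam at hx
      rw [Finset.sum_apply, Pi.zero_apply, Fintype.sum_sum_type, Fintype.sum_sum_type] at hx
      simp only [Sum.elim_inl, Sum.elim_inr] at hx
      have e1 : ∀ i : ↥(pset G u v),
          (g (Sum.inl i) • cvec G i.2) ⟨j0, hj0⟩
            = g (Sum.inl i) * (if j0 = (↑i : Sym2 V) then 1 else 0) := by
        intro i
        rw [Pi.smul_apply, cvec_coord G i.2 hj0 hju hjv, smul_eq_mul]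
      have e3 : ∀ y0 : ↥W,
          (g (Sum.inr (Sum.inr y0)) • wvec G (hconn.preconnected u ↑y0).some) ⟨j0, hj0⟩
            = 0 := by
        intro y0; rw [hw0 y0]; simp
      rw [Finset.sum_congr rfl (fun i _ => e1 i), Finset.sum_congr rfl (fun y0 _ => e3 y0)]
        at hx
      simp only [Finset.sum_const_zero, add_zero, Fintype.sum_unique, Pi.smul_apply,
        smul_eq_mul] at hx
      exact hx
    -- sum of partner coefficients is zero
    have hsum : ∑ i : ↥(pset G u v), g (Sum.inl i) = 0 := by
      have hx := congrFun hg (⟨s(u,v), hedge huv⟩ : ↥G.edgeFinset)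
      unfold fam at hx
      rw [Finset.sum_apply, Pi.zero_apply, Fintype.sum_sum_type, Fintype.sum_sum_type] at hx
      simp only [Sum.elim_inl, Sum.elim_inr] at hx
      have e1 : ∀ i : ↥(pset G u v),
          (g (Sum.inl i) • cvec G i.2) ⟨s(u,v), hedge huv⟩ = g (Sum.inl i) := by
        intro i
        rw [Pi.smul_apply, cvec_coord_uv G huv i.2, smul_eq_mul, mul_one]
      have e2 : ∀ t : Unit,
          (g (Sum.inr (Sum.inl t)) • t1vec G x y z) ⟨s(u,v), hedge huv⟩ = 0 := by
        intro t
        rw [Pi.smul_apply, t1vec_far G (hedge huv)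
          (by simp only [Sym2.mem_iff]; push_neg; exact ⟨hxu, hxv⟩)
          (by simp only [Sym2.mem_iff]; push_neg; exact ⟨hyu, hyv⟩)]
        simp
      have e3 : ∀ y0 : ↥W,
          (g (Sum.inr (Sum.inr y0)) • wvec G (hconn.preconnected u ↑y0).some)
            ⟨s(u,v), hedge huv⟩ = 0 := by
        intro y0; rw [hw0 y0]; simp
      rw [Finset.sum_congr rfl (fun i _ => e1 i), Finset.sum_congr rfl (fun t _ => e2 t),
        Finset.sum_congr rfl (fun y0 _ => e3 y0)] at hx
      simpa using hx
    have hbcases : b = 0 ∨ b = 1 := by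
      have : ∀ c : ZMod 2, c = 0 ∨ c = 1 := by decide
      exact this b
    have hb0 : b = 0 := by
      rcases hbcases with h | h1
      · exact h
      · exfalso
        have hne10 : (1 : ZMod 2) ≠ 0 := by decide
        -- each triangle edge is a partner
        have hmem : ∀ j0 : Sym2 V, (j0 = s(x,y) ∨ j0 = s(x,z) ∨ j0 = s(y,z)) →
            j0 ∈ pset G u v := by
          intro j0 htri
          have hj0 : j0 ∈ G.edgeFinset := by
            rcases htri with rfl | rfl | rfl
            exacts [hedge hxy, hedge hxz, hedge hyz]
          have hju : u ∉ j0 := by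
            rcases htri with rfl | rfl | rfl <;>
              · simp only [Sym2.mem_iff]; push_neg
                constructor <;> first
                  | exact Ne.symm hxu | exact Ne.symm hyu | exact Ne.symm hzu
          have hjv : v ∉ j0 := by
            rcases htri with rfl | rfl | rfl <;>
              · simp only [Sym2.mem_iff]; push_neg
                constructor <;> first
                  | exact Ne.symm hxv | exact Ne.symm hyv | exact Ne.symm hzv
          have hk := key j0 hj0 hju hjv
          rw [t1vec_coord G hxy.ne hxz.ne hyz.ne hj0 htri, h1, one_mul] at hk
          by_contra hnot
          have : (∑ i : ↥(pset G u v), g (Sum.inl i) *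
              (if j0 = (↑i : Sym2 V) then 1 else 0)) = 0 := by
            apply Finset.sum_eq_zero
            intro i _
            have : j0 ≠ (↑i : Sym2 V) := fun e => hnot (e ▸ i.2)
            simp [this]
          rw [this, zero_add] at hk
          exact hne10 hk
        -- value of partner coefficients
        have hgj : ∀ j : ↥(pset G u v), g (Sum.inl j) =
            (if (↑j : Sym2 V) = s(x,y) then 1 else 0) +
            (if (↑j : Sym2 V) = s(x,z) then 1 else 0) +
            (if (↑j : Sym2 V) = s(y,z) then 1 else 0) := by
          intro j
          have hjE : (↑j : Sym2 V) ∈ G.edgeFinset := pset_mem_edge G j.2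
          have hk := key ↑j hjE (pset_not_mem_left G j.2) (pset_not_mem_right G j.2)
          rw [sum_pick2 (fun i : ↥(pset G u v) => g (Sum.inl i)) j.2, h1, one_mul] at hk
          have := char2 _ _ hk
          rw [this]
          simp only [t1vec, Pi.add_apply, chi_apply]
        have : (1 : ZMod 2) = 0 := by
          have h3 : ∑ j : ↥(pset G u v), g (Sum.inl j) = 1 := by
            rw [Finset.sum_congr rfl (fun j _ => hgj j)]
            rw [Finset.sum_add_distrib, Finset.sum_add_distrib, sum_ind1, sum_ind1, sum_ind1]
            rw [if_pos (hmem _ (Or.inl rfl)), if_pos (hmem _ (Or.inr (Or.inl rfl))),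
              if_pos (hmem _ (Or.inr (Or.inr rfl)))]
            decide
          rw [← h3, hsum]
        exact hne10 this
    -- partner coefficients vanish
    have hp0 : ∀ j : ↥(pset G u v), g (Sum.inl j) = 0 := by
      intro j
      have hjE : (↑j : Sym2 V) ∈ G.edgeFinset := pset_mem_edge G j.2
      have hk := key ↑j hjE (pset_not_mem_left G j.2) (pset_not_mem_right G j.2)
      rw [sum_pick2 (fun i : ↥(pset G u v) => g (Sum.inl i)) j.2, hb0, zero_mul,
        add_zero] at hk
      exact hk
    rintro (i | t | x0)
    · exact hp0 i
    · cases t; exact hb0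
    · exact hw0 x0
  have hcard := hind.fintype_card_le_finrank
  rw [Module.finrank_pi] at hcard
  simp only [Fintype.card_sum, Fintype.card_coe, Fintype.card_unit] at hcard
  have hW : W.card = Fintype.card V - 1 := by
    rw [Finset.card_erase_of_mem (Finset.mem_univ u), Finset.card_univ]
  rw [hW] at hcard
  omega

/-- 4-cliques through the edge (u,v) -/
def kset (u v : V) : Finset (Finset V) :=
  univ.filter (fun t => G.IsNClique 4 t ∧ u ∈ t ∧ v ∈ t)

lemma pairs_card_le (u v : V) (huv : G.Adj u v) :
    (pairsF G u v).card ≤ (pset G u v).card + (kset G u v).card := by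
  classical
  have hfib : (pairsF G u v).card =
      ∑ w ∈ pset G u v, ((pairsF G u v).filter (fun p => Sym2.mk.uncurry p = w)).card :=
    Finset.card_eq_sum_card_fiberwise (fun p hp => Finset.mem_image_of_mem _ hp)
  set D := (pset G u v).filter
    (fun w => 2 ≤ ((pairsF G u v).filter (fun p => Sym2.mk.uncurry p = w)).card) with hD
  have hDsub : D ⊆ pset G u v := Finset.filter_subset _ _
  -- data for elements of D
  have hDdata : ∀ w ∈ D, ∃ c d : V, s(c,d) = w ∧ G.Adj v c ∧ G.Adj c d ∧ G.Adj d u ∧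
      c ≠ u ∧ d ≠ v ∧ G.Adj v d ∧ G.Adj c u ∧ d ≠ u ∧ c ≠ v := by
    intro w hw
    obtain ⟨hwp, hw2⟩ := Finset.mem_filter.mp hw
    obtain ⟨p, hp, q, hq, hpq⟩ := Finset.one_lt_card.mp hw2
    obtain ⟨c, d⟩ := p
    obtain ⟨c', d'⟩ := q
    obtain ⟨hpF, hpw⟩ := Finset.mem_filter.mp hp
    obtain ⟨hqF, hqw⟩ := Finset.mem_filter.mp hq
    rw [pairsF, Finset.mem_filter] at hpF hqF
    obtain ⟨-, a1, a2, a3, a4, a5⟩ := hpF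
    obtain ⟨-, b1, b2, b3, b4, b5⟩ := hqF
    have hqp : s(c', d') = s(c, d) := by rw [← hpw] at hqw; exact hqw
    rw [Sym2.eq_iff] at hqp
    rcases hqp with ⟨rfl, rfl⟩ | ⟨rfl, rfl⟩
    · exact absurd rfl hpq
    · exact ⟨d', c', by rw [← hpw]; rfl, a1, a2, a3, a4, a5, b1, b3, b4, b5⟩
  have hble : ∀ w ∈ pset G u v,
      ((pairsF G u v).filter (fun p => Sym2.mk.uncurry p = w)).card ≤
        1 + (if w ∈ D then 1 else 0) := by
    intro w hw
    by_cases hwD : w ∈ D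
    · rw [if_pos hwD]
      obtain ⟨c, d, h6, h1, h2, h3, h4, h5, -⟩ := hDdata w hwD
      have hsub : (pairsF G u v).filter (fun p => Sym2.mk.uncurry p = w) ⊆ {(c,d), (d,c)} := by
        intro p hp
        obtain ⟨a, b⟩ := p
        obtain ⟨-, hpw⟩ := Finset.mem_filter.mp hp
        rw [← h6] at hpw
        rw [Finset.mem_insert, Finset.mem_singleton]
        change s(a, b) = s(c, d) at hpw
        rw [Sym2.eq_iff] at hpw
        rcases hpw with ⟨rfl, rfl⟩ | ⟨rfl, rfl⟩
        · left; rfl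
        · right; rfl
      calc ((pairsF G u v).filter (fun p => Sym2.mk.uncurry p = w)).card
          ≤ ({(c,d), (d,c)} : Finset (V × V)).card := Finset.card_le_card hsub
        _ ≤ 2 := (Finset.card_insert_le _ _).trans (by simp)
    · rw [if_neg hwD]
      by_contra hcon
      push_neg at hcon
      exact hwD (Finset.mem_filter.mpr ⟨hw, by omega⟩)
  have hstep : (pairsF G u v).card ≤ (pset G u v).card + D.card := by
    rw [hfib]
    calc ∑ w ∈ pset G u v, ((pairsF G u v).filter (fun p => Sym2.mk.uncurry p = w)).card
        ≤ ∑ w ∈ pset G u v, (1 + (if w ∈ D then 1 else 0)) := Finset.sum_le_sum hble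
      _ = (pset G u v).card + D.card := by
          rw [Finset.sum_add_distrib, Finset.sum_const, smul_eq_mul, mul_one]
          congr 1
          rw [Finset.sum_ite_mem, Finset.sum_const, smul_eq_mul, mul_one,
            Finset.inter_eq_right.mpr hDsub]
  refine hstep.trans (Nat.add_le_add_left ?_ _)
  -- injection from D into cliques through (u,v)
  apply Finset.card_le_card_of_injOn
    (fun w => insert u (insert v (univ.filter (· ∈ w))))
  · intro w hw
    obtain ⟨c, d, h6, hvc, hcd, hdu, hcu, hdv, hvd, hcu', hdu', hcv⟩ := hDdata w hw
    have hset : univ.filter (· ∈ w) = {c, d} := by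
      ext a
      simp only [Finset.mem_filter, Finset.mem_univ, true_and, Finset.mem_insert,
        Finset.mem_singleton, ← h6, Sym2.mem_iff]
    simp only [Finset.mem_coe]
    rw [hset, kset, Finset.mem_filter]
    refine ⟨Finset.mem_univ _, ⟨?_, ?_⟩, Finset.mem_insert_self _ _,
      Finset.mem_insert_of_mem (Finset.mem_insert_self _ _)⟩
    · -- clique
      intro a ha b hb hab
      simp only [Finset.coe_insert, Set.mem_insert_iff, Finset.coe_singleton,
        Set.mem_singleton_iff] at ha hb
      have huc : G.Adj u c := hcu'.symm
      have hud : G.Adj u d := hdu.symm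
      have hvc' : G.Adj v c := hvc
      have hvd' : G.Adj v d := hvd
      have hdc : G.Adj d c := hcd.symm
      have hcv2 : G.Adj c v := hvc.symm
      have hdv2 : G.Adj d v := hvd.symm
      have hvu : G.Adj v u := huv.symm
      have hcu2 : G.Adj c u := hcu'
      have hdu2 : G.Adj d u := hdu
      have hcd2 : G.Adj c d := hcd
      have huv2 : G.Adj u v := huv
      rcases ha with rfl | rfl | rfl | rfl <;> rcases hb with rfl | rfl | rfl | rfl <;>
        first | exact absurd rfl hab | assumption
    · -- card = 4
      have hu : u ∉ insert v ({c, d} : Finset V) := by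
        simp only [Finset.mem_insert, Finset.mem_singleton]
        push_neg
        exact ⟨huv.ne, fun e => hcu e.symm, fun e => hdu' e.symm⟩
      have hv : v ∉ ({c, d} : Finset V) := by
        simp only [Finset.mem_insert, Finset.mem_singleton]
        push_neg
        exact ⟨fun e => hcv e.symm, fun e => hdv e.symm⟩
      rw [Finset.card_insert_of_notMem hu, Finset.card_insert_of_notMem hv,
        Finset.card_pair hcd.ne]
  · intro w hw w' hw' heq
    obtain ⟨c, d, h6, hvc, hcd, hdu, hcu, hdv, hvd, hcu', hdu', hcv⟩ :=
      hDdata w (Finset.mem_coe.mp hw)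
    obtain ⟨c', d', h6', hvc', hcd', hdu'', hcu2, hdv', hvd', hcu3, hdu3, hcv'⟩ :=
      hDdata w' (Finset.mem_coe.mp hw')
    have hset : univ.filter (· ∈ w) = {c, d} := by
      ext a
      simp only [Finset.mem_filter, Finset.mem_univ, true_and, Finset.mem_insert,
        Finset.mem_singleton, ← h6, Sym2.mem_iff]
    have hset' : univ.filter (· ∈ w') = {c', d'} := by
      ext a
      simp only [Finset.mem_filter, Finset.mem_univ, true_and, Finset.mem_insert,
        Finset.mem_singleton, ← h6', Sym2.mem_iff]
    simp only [hset, hset'] at heq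
    have hmemc : c ∈ ({c', d'} : Finset V) := by
      have : c ∈ insert u (insert v ({c', d'} : Finset V)) := by
        rw [← heq]
        exact Finset.mem_insert_of_mem (Finset.mem_insert_of_mem
          (Finset.mem_insert_self _ _))
      rcases Finset.mem_insert.mp this with e | h2
      · exact absurd e hcu
      rcases Finset.mem_insert.mp h2 with e | h3
      · exact absurd e hcv
      · exact h3
    have hmemd : d ∈ ({c', d'} : Finset V) := by
      have : d ∈ insert u (insert v ({c', d'} : Finset V)) := by
        rw [← heq]
        exact Finset.mem_insert_of_mem (Finset.mem_insert_of_mem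
          (Finset.mem_insert_of_mem (Finset.mem_singleton_self _)))
      rcases Finset.mem_insert.mp this with e | h2
      · exact absurd e hdu'
      rcases Finset.mem_insert.mp h2 with e | h3
      · exact absurd e hdv
      · exact h3
    rw [Finset.mem_insert, Finset.mem_singleton] at hmemc hmemd
    rw [← h6, ← h6', Sym2.eq_iff]
    have hcd_ne : c ≠ d := hcd.ne
    rcases hmemc with rfl | rfl
    · rcases hmemd with rfl | rfl
      · exact absurd rfl hcd_ne
      · exact Or.inl ⟨rfl, rfl⟩
    · rcases hmemd with rfl | rfl
      · exact Or.inr ⟨rfl, rfl⟩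
      · exact absurd rfl hcd_ne

lemma three_elems {s : Finset V} (h : 3 ≤ s.card) :
    ∃ x ∈ s, ∃ y ∈ s, ∃ z ∈ s, x ≠ y ∧ x ≠ z ∧ y ≠ z := by
  obtain ⟨x, hx⟩ := (Finset.card_pos (s := s)).mp (by omega)
  have e1 := Finset.card_erase_of_mem hx
  obtain ⟨y, hy⟩ := (Finset.card_pos (s := s.erase x)).mp (by omega)
  have e2 := Finset.card_erase_of_mem hy
  obtain ⟨z, hz⟩ := (Finset.card_pos (s := (s.erase x).erase y)).mp (by omega)
  obtain ⟨hzy, hz2⟩ := Finset.mem_erase.mp hz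
  obtain ⟨hzx, hz3⟩ := Finset.mem_erase.mp hz2
  obtain ⟨hyx, hy2⟩ := Finset.mem_erase.mp hy
  exact ⟨x, hx, y, hy2, z, hz3, Ne.symm hyx, Ne.symm hzx, Ne.symm hzy⟩

lemma pbound (hconn : G.Connected) {s0 : Finset V} (hs0 : G.IsNClique 4 s0)
    (u v : V) (huv : G.Adj u v) :
    (pset G u v).card + Fintype.card V ≤ G.edgeFinset.card := by
  have hd1 : 1 ≤ Fintype.card V := Fintype.card_pos_iff.mpr ⟨u⟩
  have hs02 := hs0.2
  rcases Finset.eq_empty_or_nonempty (aset G u v) with hA | hA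
  · -- triangle-free edge : use a triangle of the K4
    have hnotboth : ¬(u ∈ s0 ∧ v ∈ s0) := by
      rintro ⟨hu, hv⟩
      have h4 : 3 ≤ (s0.erase v).card := by
        rw [Finset.card_erase_of_mem hv, hs0.2]
      have e1 := Finset.card_erase_of_mem (Finset.mem_erase.mpr ⟨huv.ne, hu⟩ :
        u ∈ s0.erase v)
      obtain ⟨t, ht⟩ := (Finset.card_pos (s := (s0.erase v).erase u)).mp (by omega)
      obtain ⟨htu, ht2⟩ := Finset.mem_erase.mp ht
      obtain ⟨htv, ht3⟩ := Finset.mem_erase.mp ht2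
      have h6 : t ∈ aset G u v := by
        rw [aset, Finset.mem_filter]
        exact ⟨Finset.mem_univ _, hs0.1 hu ht3 (Ne.symm htu), hs0.1 hv ht3 (Ne.symm htv)⟩
      rw [hA] at h6
      exact absurd h6 (Finset.notMem_empty t)
    have hcard3 : 3 ≤ (s0 \ {u, v}).card := by
      rcases Classical.em (u ∈ s0) with hu | hu
      · have hv : v ∉ s0 := fun hv => hnotboth ⟨hu, hv⟩
        have heq : s0 \ {u, v} = s0.erase u := by
          ext a
          simp only [Finset.mem_sdiff, Finset.mem_erase, Finset.mem_insert,
            Finset.mem_singleton]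
          constructor
          · rintro ⟨h1, h2⟩; push_neg at h2; exact ⟨h2.1, h1⟩
          · rintro ⟨h1, h2⟩
            refine ⟨h2, ?_⟩
            push_neg
            exact ⟨h1, fun e => hv (e ▸ h2)⟩
        rw [heq, Finset.card_erase_of_mem hu]
        omega
      · have h7 : s0.erase v ⊆ s0 \ {u, v} := by
          intro a ha
          obtain ⟨hav, has⟩ := Finset.mem_erase.mp ha
          rw [Finset.mem_sdiff]
          refine ⟨has, ?_⟩
          simp only [Finset.mem_insert, Finset.mem_singleton]
          push_neg
          exact ⟨fun e => hu (e ▸ has), hav⟩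
        have h8 := Finset.card_le_card h7
        rcases Classical.em (v ∈ s0) with hv | hv
        · have := Finset.card_erase_of_mem hv; omega
        · rw [Finset.erase_eq_of_notMem hv] at h8; omega
    obtain ⟨x, hx, y, hy, z, hz, hxy, hxz, hyz⟩ := three_elems hcard3
    obtain ⟨hxs, hxuv⟩ := Finset.mem_sdiff.mp hx
    obtain ⟨hys, hyuv⟩ := Finset.mem_sdiff.mp hy
    obtain ⟨hzs, hzuv⟩ := Finset.mem_sdiff.mp hz
    simp only [Finset.mem_insert, Finset.mem_singleton] at hxuv hyuv hzuv
    push_neg at hxuv hyuv hzuv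
    have hb := main2 G hconn u v huv x y z (hs0.1 hxs hys hxy) (hs0.1 hxs hzs hxz)
      (hs0.1 hys hzs hyz) hxuv.1 hxuv.2 hyuv.1 hyuv.2 hzuv.1 hzuv.2 hA
    omega
  · have hb := main1 G hconn u v huv
    have hA1 : 1 ≤ (aset G u v).card := Finset.card_pos.mpr hA
    omega

lemma pbound_strict (hconn : G.Connected) {s0 : Finset V} (hs0 : G.IsNClique 4 s0)
    (u v : V) (hu : u ∈ s0) (hv : v ∈ s0) (huv : G.Adj u v) :
    (pset G u v).card + Fintype.card V + 1 ≤ G.edgeFinset.card := by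
  have hd1 : 1 ≤ Fintype.card V := Fintype.card_pos_iff.mpr ⟨u⟩
  have h4 : 3 ≤ (s0.erase v).card := by
    rw [Finset.card_erase_of_mem hv, hs0.2]
  have e1 := Finset.card_erase_of_mem (Finset.mem_erase.mpr ⟨huv.ne, hu⟩ : u ∈ s0.erase v)
  obtain ⟨k, hk, l, hl, hkl⟩ :=
    (Finset.one_lt_card (s := (s0.erase v).erase u)).mp (by omega)
  obtain ⟨hku, hk2⟩ := Finset.mem_erase.mp hk
  obtain ⟨hkv, hk3⟩ := Finset.mem_erase.mp hk2
  obtain ⟨hlu, hl2⟩ := Finset.mem_erase.mp hl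
  obtain ⟨hlv, hl3⟩ := Finset.mem_erase.mp hl2
  have hkA : k ∈ aset G u v := by
    rw [aset, Finset.mem_filter]
    exact ⟨Finset.mem_univ _, hs0.1 hu hk3 (Ne.symm hku), hs0.1 hv hk3 (Ne.symm hkv)⟩
  have hlA : l ∈ aset G u v := by
    rw [aset, Finset.mem_filter]
    exact ⟨Finset.mem_univ _, hs0.1 hu hl3 (Ne.symm hlu), hs0.1 hv hl3 (Ne.symm hlv)⟩
  have hA2 : 2 ≤ (aset G u v).card := by
    have hsub : ({k, l} : Finset V) ⊆ aset G u v := by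
      intro a ha
      rcases Finset.mem_insert.mp ha with rfl | ha
      · exact hkA
      · rw [Finset.mem_singleton.mp ha]; exact hlA
    calc (2:ℕ) = ({k, l} : Finset V).card := (Finset.card_pair hkl).symm
      _ ≤ _ := Finset.card_le_card hsub
  have hb := main1 G hconn u v huv
  omega

/-- GLOBAL COUNT -/
lemma global (hconn : G.Connected) {s0 : Finset V} (hs0 : G.IsNClique 4 s0) :
    ((univ : Finset (V × V × V × V)).filter (fun p =>
        G.Adj p.1 p.2.1 ∧ G.Adj p.2.1 p.2.2.1 ∧ G.Adj p.2.2.1 p.2.2.2 ∧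
        G.Adj p.2.2.2 p.1 ∧ p.1 ≠ p.2.2.1 ∧ p.2.1 ≠ p.2.2.2)).card + 1 ≤
      2 * G.edgeFinset.card * (G.edgeFinset.card - Fintype.card V) +
        12 * (univ.filter (fun t : Finset V => G.IsNClique 4 t)).card ∧
    Fintype.card V ≤ G.edgeFinset.card := by
  classical
  set e := G.edgeFinset.card with he
  set d := Fintype.card V with hd
  set OA := (univ : Finset (V × V)).filter (fun q => G.Adj q.1 q.2) with hOAdef
  set Tset := (univ : Finset (V × V × V × V)).filter (fun p =>
    G.Adj p.1 p.2.1 ∧ G.Adj p.2.1 p.2.2.1 ∧ G.Adj p.2.2.1 p.2.2.2 ∧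
    G.Adj p.2.2.2 p.1 ∧ p.1 ≠ p.2.2.1 ∧ p.2.1 ≠ p.2.2.2) with hTdef
  set C := (univ : Finset (Finset V)).filter (fun t => G.IsNClique 4 t) with hCdef
  -- a K4 edge
  obtain ⟨u0, hu0, v0, hv0, huv0⟩ := Finset.one_lt_card.mp (by rw [hs0.2]; omega)
  have hadj0 : G.Adj u0 v0 := hs0.1 hu0 hv0 huv0
  have hq0 : (u0, v0) ∈ OA := Finset.mem_filter.mpr ⟨Finset.mem_univ _, hadj0⟩
  have hde : d ≤ e := by have := pbound G hconn hs0 u0 v0 hadj0; omega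
  -- card OA = 2e
  have hOA : OA.card = 2 * e := by
    have h1 : Fintype.card G.Dart = 2 * e := SimpleGraph.dart_card_eq_twice_card_edges G
    have h2 : (↥OA) ≃ G.Dart :=
      { toFun := fun q => SimpleGraph.Dart.mk (↑q : V × V) (Finset.mem_filter.mp q.2).2
        invFun := fun dt => ⟨dt.toProd, Finset.mem_filter.mpr ⟨Finset.mem_univ _, dt.adj⟩⟩
        left_inv := fun q => rfl
        right_inv := fun dt => rfl }
    rw [← h1, ← Fintype.card_coe OA]
    exact Fintype.card_congr h2
  -- fiber decomposition of Tset over OA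
  have hfib : Tset.card = ∑ q ∈ OA, (pairsF G q.1 q.2).card := by
    rw [Finset.card_eq_sum_card_fiberwise
      (f := fun p : V × V × V × V => (p.1, p.2.1)) (t := OA)
      (fun p hp => Finset.mem_filter.mpr
        ⟨Finset.mem_univ _, (Finset.mem_filter.mp hp).2.1⟩)]
    apply Finset.sum_congr rfl
    intro q hq
    refine Finset.card_bij' (fun p _ => (p.2.2.1, p.2.2.2))
      (fun r _ => (q.1, q.2, r.1, r.2)) ?_ ?_ ?_ ?_
    · intro p hp
      obtain ⟨hpT, hpq⟩ := Finset.mem_filter.mp hp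
      obtain ⟨-, a1, a2, a3, a4, a5, a6⟩ := Finset.mem_filter.mp hpT
      obtain rfl : q = (p.1, p.2.1) := hpq.symm
      exact Finset.mem_filter.mpr ⟨Finset.mem_univ _, a2, a3, a4,
        fun h => a5 h.symm, fun h => a6 h.symm⟩
    · intro r hr
      obtain ⟨-, b1, b2, b3, b4, b5⟩ := Finset.mem_filter.mp hr
      have hadjq : G.Adj q.1 q.2 := (Finset.mem_filter.mp hq).2
      refine Finset.mem_filter.mpr ⟨Finset.mem_filter.mpr
        ⟨Finset.mem_univ _, hadjq, b1, b2, b3, fun h => b4 h.symm, fun h => b5 h.symm⟩, rfl⟩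
    · intro p hp
      obtain ⟨hpT, hpq⟩ := Finset.mem_filter.mp hp
      obtain rfl : q = (p.1, p.2.1) := hpq.symm
      rfl
    · intro r hr
      rfl
  -- per-edge bound and strictness
  have hple : ∀ q ∈ OA, (pset G q.1 q.2).card ≤ e - d := by
    intro q hq
    have := pbound G hconn hs0 q.1 q.2 (Finset.mem_filter.mp hq).2
    omega
  have hstrict : ∑ q ∈ OA, (pset G q.1 q.2).card < ∑ q ∈ OA, (e - d) := by
    apply Finset.sum_lt_sum hple
    refine ⟨(u0, v0), hq0, ?_⟩
    show (pset G u0 v0).card < e - d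
    have := pbound_strict G hconn hs0 u0 v0 hu0 hv0 hadj0
    omega
  have hsum1 : ∑ q ∈ OA, (e - d) = 2 * e * (e - d) := by
    rw [Finset.sum_const, hOA, smul_eq_mul]
  -- clique sum
  have hksum : ∑ q ∈ OA, (kset G q.1 q.2).card ≤ 12 * C.card := by
    have hstep : ∀ q ∈ OA, (kset G q.1 q.2).card =
        ∑ t ∈ C, (if q.1 ∈ t ∧ q.2 ∈ t then 1 else 0) := by
      intro q hq
      rw [kset, hCdef, ← Finset.filter_filter, Finset.card_filter]
    rw [Finset.sum_congr rfl hstep, Finset.sum_comm]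
    have hinner : ∀ t ∈ C, ∑ q ∈ OA, (if q.1 ∈ t ∧ q.2 ∈ t then 1 else 0) ≤ 12 := by
      intro t ht
      have ht4 : t.card = 4 := (Finset.mem_filter.mp ht).2.2
      rw [← Finset.card_filter]
      have hsub : OA.filter (fun q => q.1 ∈ t ∧ q.2 ∈ t) ⊆ t.offDiag := by
        intro q hq
        obtain ⟨hqOA, h1, h2⟩ := Finset.mem_filter.mp hq
        exact Finset.mem_offDiag.mpr ⟨h1, h2, (Finset.mem_filter.mp hqOA).2.ne⟩
      calc (OA.filter (fun q => q.1 ∈ t ∧ q.2 ∈ t)).card ≤ t.offDiag.card :=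
            Finset.card_le_card hsub
        _ = 12 := by rw [Finset.offDiag_card, ht4]
    calc ∑ t ∈ C, ∑ q ∈ OA, (if q.1 ∈ t ∧ q.2 ∈ t then 1 else 0)
        ≤ ∑ _t ∈ C, 12 := Finset.sum_le_sum hinner
      _ = 12 * C.card := by rw [Finset.sum_const, smul_eq_mul, mul_comm]
  -- per-edge pairs bound
  have hpairs : ∀ q ∈ OA, (pairsF G q.1 q.2).card ≤
      (pset G q.1 q.2).card + (kset G q.1 q.2).card := by
    intro q hq
    exact pairs_card_le G q.1 q.2 (Finset.mem_filter.mp hq).2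
  refine ⟨?_, hde⟩
  have hchain : Tset.card ≤ (∑ q ∈ OA, (pset G q.1 q.2).card) +
      (∑ q ∈ OA, (kset G q.1 q.2).card) := by
    rw [hfib, ← Finset.sum_add_distrib]
    exact Finset.sum_le_sum hpairs
  have h1 : ∑ q ∈ OA, (pset G q.1 q.2).card + 1 ≤ 2 * e * (e - d) := by
    rw [← hsum1]; omega
  omega

end C4aux

open C4aux in
theorem aux_final {V : Type*} [Fintype V] (G : SimpleGraph V) (hconn : G.Connected)
    (hK4 : ∃ s : Finset V, G.IsNClique 4 s)
    (d e : ℕ) (hd : d = Fintype.card V) (he : e = Nat.card G.edgeSet) :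
    ((Nat.card {p : V × V × V × V //
      G.Adj p.1 p.2.1 ∧ G.Adj p.2.1 p.2.2.1 ∧ G.Adj p.2.2.1 p.2.2.2 ∧ G.Adj p.2.2.2 p.1 ∧
      p.1 ≠ p.2.2.1 ∧ p.2.1 ≠ p.2.2.2} / 8 : ℕ) : ℚ) <
      (e : ℚ) * ((e : ℚ) - d) / 4 + 3 / 2 * (Nat.card {s : Finset V // G.IsNClique 4 s}) := by
  classical
  obtain ⟨s0, hs0⟩ := hK4
  obtain ⟨hT, hdeN⟩ := C4aux.global G hconn hs0
  have heE : e = G.edgeFinset.card := by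
    rw [he, Nat.card_eq_fintype_card, SimpleGraph.edgeFinset_card]
  have hc4 : Nat.card {p : V × V × V × V //
      G.Adj p.1 p.2.1 ∧ G.Adj p.2.1 p.2.2.1 ∧ G.Adj p.2.2.1 p.2.2.2 ∧ G.Adj p.2.2.2 p.1 ∧
      p.1 ≠ p.2.2.1 ∧ p.2.1 ≠ p.2.2.2} =
      ((univ : Finset (V × V × V × V)).filter (fun p =>
        G.Adj p.1 p.2.1 ∧ G.Adj p.2.1 p.2.2.1 ∧ G.Adj p.2.2.1 p.2.2.2 ∧
        G.Adj p.2.2.2 p.1 ∧ p.1 ≠ p.2.2.1 ∧ p.2.1 ≠ p.2.2.2)).card := by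
    rw [Nat.card_eq_fintype_card, Fintype.card_subtype]
  have hk4 : Nat.card {s : Finset V // G.IsNClique 4 s} =
      ((univ : Finset (Finset V)).filter (fun t : Finset V => G.IsNClique 4 t)).card := by
    rw [Nat.card_eq_fintype_card, Fintype.card_subtype]
  set TT := ((univ : Finset (V × V × V × V)).filter (fun p =>
        G.Adj p.1 p.2.1 ∧ G.Adj p.2.1 p.2.2.1 ∧ G.Adj p.2.2.1 p.2.2.2 ∧
        G.Adj p.2.2.2 p.1 ∧ p.1 ≠ p.2.2.1 ∧ p.2.1 ≠ p.2.2.2)).card with hTT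
  set K := ((univ : Finset (Finset V)).filter (fun t : Finset V => G.IsNClique 4 t)).card
    with hK
  rw [hc4, hk4]
  rw [heE] at *
  rw [hd] at *
  set E := G.edgeFinset.card
  set D := Fintype.card V
  -- numeric part
  have h8 : ((TT / 8 : ℕ) : ℚ) ≤ (TT : ℚ) / 8 := Nat.cast_div_le
  have hcast : ((E - D : ℕ) : ℚ) = (E : ℚ) - (D : ℚ) := by
    rw [Nat.cast_sub hdeN]
  have hTQ : (TT : ℚ) + 1 ≤ 2 * E * ((E : ℚ) - D) + 12 * K := by
    have := (Nat.cast_le (α := ℚ)).mpr hT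
    push_cast at this
    rw [hcast] at this
    linarith
  calc ((TT / 8 : ℕ) : ℚ) ≤ (TT : ℚ) / 8 := h8
    _ < ((E : ℚ) * ((E : ℚ) - D)) / 4 + 3 / 2 * K := by linarith



/-- For a connected graph `G` with `d` vertices and `e` edges
containing at least one `K₄`, `c₄(G) < e(e-d)/4 + (3/2)·k₄(G)`. -/
theorem c4_withK4_lt [Fintype V] (G : SimpleGraph V) (hconn : G.Connected)
    (hK4 : ∃ s : Finset V, G.IsNClique 4 s)
    (d e : ℕ) (hd : d = Fintype.card V) (he : e = edgeCount G) :
    (c4 G : ℚ) < (e : ℚ) * ((e : ℚ) - d) / 4 + 3 / 2 * k4 G := by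
  have h := aux_final G hconn hK4 d e hd (by rw [he, edgeCount])
  simpa [c4, k4] using h
end

section
/- Every connected bipartite graph G with d vertices and e edges satisfies c_4(G) ≤ C(e-d+2, 2). -/
open SimpleGraph

variable {V : Type*}

section C4Helpers

/-- If every edge of `G` has its endpoints reachable in `H`, and `G` is preconnected,
then `H` is preconnected. -/
lemma precon_aux {G H : SimpleGraph V} (hG : G.Preconnected)
    (h : ∀ x y, G.Adj x y → H.Reachable x y) : H.Preconnected := by
  intro x y
  obtain ⟨w⟩ := hG x y
  induction w with
  | nil => exact Reachable.refl _
  | cons ha _ ih => exact (h _ _ ha).trans ih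

lemma card_le_of_connected [Fintype V] {G : SimpleGraph V} (h : G.Connected) :
    Fintype.card V ≤ Nat.card G.edgeSet + 1 := by
  classical
  obtain ⟨root⟩ := h.nonempty
  have hsel : ∀ v : {v : V // v ≠ root}, ∃ w : V, G.Adj v.1 w ∧ G.dist w root < G.dist v.1 root := by
    rintro ⟨v, hv⟩
    have hdist : G.dist v root ≠ 0 := by
      intro h0
      exact hv (h.dist_eq_zero_iff.mp h0)
    obtain ⟨p, hp⟩ := exists_walk_of_dist_ne_zero hdist
    cases p with
    | nil => exact absurd rfl hv
    | cons ha q =>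
      refine ⟨_, ha, ?_⟩
      calc G.dist _ root ≤ q.length := dist_le q
      _ < G.dist v root := by rw [← hp]; simp [Walk.length_cons]
  choose w hadj hlt using hsel
  have hinj : Function.Injective
      (fun v : {v : V // v ≠ root} => (⟨s(v.1, w v), hadj v⟩ : G.edgeSet)) := by
    rintro a b hab
    have hab : s(a.1, w a) = s(b.1, w b) := congrArg Subtype.val hab
    rw [Sym2.eq_iff] at hab
    rcases hab with ⟨h1, _⟩ | ⟨h1, h2⟩
    · exact Subtype.ext h1
    · exfalso
      have l1 := hlt a
      have l2 := hlt b
      rw [h1, h2] at l1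
      omega
  have h1 := Nat.card_le_card_of_injective _ hinj
  have h4 : Nat.card {x // x ∈ G.edgeSet} = Nat.card G.edgeSet := rfl
  have h2 : Nat.card {v : V // v ≠ root} = Fintype.card V - 1 := by
    simp [Nat.card_eq_fintype_card, Fintype.card_subtype_compl]
  have h3 : 1 ≤ Fintype.card V := Fintype.card_pos_iff.mpr ⟨root⟩
  omega

lemma fin2 {a b c : Fin 2} (h1 : a ≠ c) (h2 : b ≠ c) : a = b := by
  revert h1 h2; revert a b c; decide

lemma key [Fintype V] (n : ℕ) (G : SimpleGraph V) (hconn : G.Connected)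
    (hbip : G.Colorable 2) (hn : edgeCount G = n) :
    Nat.card {p : V × V × V × V //
      G.Adj p.1 p.2.1 ∧ G.Adj p.2.1 p.2.2.1 ∧ G.Adj p.2.2.1 p.2.2.2 ∧ G.Adj p.2.2.2 p.1 ∧
      p.1 ≠ p.2.2.1 ∧ p.2.1 ≠ p.2.2.2} ≤ 8 * Nat.choose (n + 2 - Fintype.card V) 2 := by
  classical
  induction n using Nat.strong_induction_on generalizing G with
  | _ n IH =>
  by_cases h0 : Nat.card {p : V × V × V × V //
      G.Adj p.1 p.2.1 ∧ G.Adj p.2.1 p.2.2.1 ∧ G.Adj p.2.2.1 p.2.2.2 ∧ G.Adj p.2.2.2 p.1 ∧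
      p.1 ≠ p.2.2.1 ∧ p.2.1 ≠ p.2.2.2} = 0
  · exact h0 ▸ Nat.zero_le _
  obtain ⟨⟨⟨u, v, c0, d0⟩, h1', h2', h3', h4', h5', h6'⟩⟩ := (Nat.card_ne_zero.mp h0).1
  have h1 : G.Adj u v := h1'
  have h2 : G.Adj v c0 := h2'
  have h3 : G.Adj c0 d0 := h3'
  have h4 : G.Adj d0 u := h4'
  have h5 : u ≠ c0 := h5'
  have h6 : v ≠ d0 := h6'
  clear h1' h2' h3' h4' h5' h6'
  obtain ⟨col⟩ := hbip
  -- the set of completions of the edge (u,v) into a 4-cycle u-v-x-y-u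
  set F : Set (V × V) :=
    {q | G.Adj v q.1 ∧ G.Adj q.1 q.2 ∧ G.Adj q.2 u ∧ q.1 ≠ u ∧ q.2 ≠ v} with hF
  have hq0 : (c0, d0) ∈ F := ⟨h2, h3, h4, fun h => h5 h.symm, fun h => h6 h.symm⟩
  have hcol : ∀ q ∈ F, col q.1 = col u ∧ col q.2 = col v := by
    rintro ⟨x, y⟩ ⟨ha1, ha2, ha3, -, -⟩
    have ha1 : G.Adj v x := ha1
    have ha3 : G.Adj y u := ha3
    exact ⟨fin2 (fun h => col.valid ha1.symm h) (fun h => col.valid h1 h),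
      fin2 (fun h => col.valid ha3 h) (fun h => col.valid h1.symm h)⟩
  set E : Set (Sym2 V) := (fun q : V × V => s(q.1, q.2)) '' F with hE
  have hEsub : E ⊆ G.edgeSet := by
    rintro _ ⟨q, hq, rfl⟩; exact hq.2.1
  have hEcard : E.ncard = F.ncard := by
    refine Set.ncard_image_of_injOn ?_
    rintro ⟨x, y⟩ hxy ⟨x', y'⟩ hxy' hee
    have hee' : s(x, y) = s(x', y') := hee
    rcases Sym2.eq_iff.mp hee' with ⟨hh1, hh2⟩ | ⟨hh1, hh2⟩
    · rw [hh1, hh2]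
    · exfalso
      have c1 : col x = col u := (hcol _ hxy).1
      have c2 : col y' = col v := (hcol _ hxy').2
      rw [hh1, c2] at c1
      exact col.valid h1 c1.symm
  have hnE1 : ∀ x : V, col x = col u → s(x, v) ∉ E := by
    rintro x hx ⟨⟨z, w⟩, hzw, hzweq⟩
    have hc1 : col z = col u := (hcol _ hzw).1
    have hzweq' : s(z, w) = s(x, v) := hzweq
    have hw : w ≠ v := hzw.2.2.2.2
    rcases Sym2.eq_iff.mp hzweq' with ⟨hh1, hh2⟩ | ⟨hh1, hh2⟩
    · exact hw hh2
    · rw [hh1] at hc1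
      exact col.valid h1 hc1.symm
  have hnE2 : ∀ y : V, s(u, y) ∉ E := by
    rintro y ⟨⟨z, w⟩, hzw, hzweq⟩
    have hzweq' : s(z, w) = s(u, y) := hzweq
    have hzne : z ≠ u := hzw.2.2.2.1
    have hc2 : col w = col v := (hcol _ hzw).2
    rcases Sym2.eq_iff.mp hzweq' with ⟨hh1, hh2⟩ | ⟨hh1, hh2⟩
    · exact hzne hh1
    · rw [hh2] at hc2
      exact col.valid h1 hc2
  -- G minus all the opposite edges is still connected
  have hVne : Nonempty V := hconn.nonempty
  have hHconn : (G.deleteEdges E).Connected := by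
    refine Connected.mk (precon_aux hconn.preconnected ?_)
    intro x y hxy
    by_cases hmem : s(x, y) ∈ E
    · obtain ⟨⟨z, w⟩, hzw, hzweq⟩ := hmem
      have hzv : G.Adj v z := hzw.1
      have hwu : G.Adj w u := hzw.2.2.1
      have hreach : (G.deleteEdges E).Reachable z w := by
        have e1 : (G.deleteEdges E).Adj z v :=
          deleteEdges_adj.mpr ⟨hzv.symm, hnE1 z (hcol _ hzw).1⟩
        have e2 : (G.deleteEdges E).Adj v u :=
          deleteEdges_adj.mpr ⟨h1.symm, fun hm => hnE2 v (Sym2.eq_swap ▸ hm)⟩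
        have e3 : (G.deleteEdges E).Adj u w := deleteEdges_adj.mpr ⟨hwu.symm, hnE2 w⟩
        exact (e1.reachable.trans e2.reachable).trans e3.reachable
      have hzweq' : s(z, w) = s(x, y) := hzweq
      rcases Sym2.eq_iff.mp hzweq' with ⟨hh1, hh2⟩ | ⟨hh1, hh2⟩
      · rw [← hh1, ← hh2]; exact hreach
      · rw [← hh1, ← hh2]; exact hreach.symm
    · exact (deleteEdges_adj.mpr ⟨hxy, hmem⟩).reachable
  have hHcard : (G.edgeSet \ E).ncard + E.ncard = n := by
    rw [Set.ncard_diff_add_ncard_of_subset hEsub (Set.toFinite _)]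
    rw [← hn, edgeCount, Nat.card_coe_set_eq]
  have hHle := card_le_of_connected hHconn
  rw [edgeSet_deleteEdges, Nat.card_coe_set_eq] at hHle
  have hFn : F.ncard ≤ n := by omega
  have htd : F.ncard + Fintype.card V ≤ n + 1 := by omega
  have ht1 : 1 ≤ F.ncard := (Set.ncard_pos (Set.toFinite _)).mpr ⟨_, hq0⟩
  -- Step B : delete the edge uv, stays connected
  have huvmem : s(u, v) ∈ G.edgeSet := h1
  have hnn : G.edgeSet.ncard = n := by rw [← hn, edgeCount, Nat.card_coe_set_eq]
  have hG'conn : (G.deleteEdges {s(u, v)}).Connected := by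
    refine Connected.mk (precon_aux hconn.preconnected ?_)
    intro x y hxy
    by_cases hmem : s(x, y) ∈ ({s(u, v)} : Set (Sym2 V))
    · have e1 : (G.deleteEdges {s(u, v)}).Adj u d0 := deleteEdges_adj.mpr ⟨h4.symm, by
        simp only [Set.mem_singleton_iff, Sym2.eq_iff]
        rintro (⟨-, hh⟩ | ⟨hh, -⟩)
        · exact h6 hh.symm
        · exact h1.ne hh⟩
      have e2 : (G.deleteEdges {s(u, v)}).Adj d0 c0 := deleteEdges_adj.mpr ⟨h3.symm, by
        simp only [Set.mem_singleton_iff, Sym2.eq_iff]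
        rintro (⟨hh, -⟩ | ⟨hh, -⟩)
        · exact h4.ne hh
        · exact h6 hh.symm⟩
      have e3 : (G.deleteEdges {s(u, v)}).Adj c0 v := deleteEdges_adj.mpr ⟨h2.symm, by
        simp only [Set.mem_singleton_iff, Sym2.eq_iff]
        rintro (⟨hh, -⟩ | ⟨-, hh⟩)
        · exact h5 hh.symm
        · exact h1.ne hh.symm⟩
      have hreach : (G.deleteEdges {s(u, v)}).Reachable u v :=
        (e1.reachable.trans e2.reachable).trans e3.reachable
      rw [Set.mem_singleton_iff, Sym2.eq_iff] at hmem
      rcases hmem with ⟨hh1, hh2⟩ | ⟨hh1, hh2⟩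
      · rw [hh1, hh2]; exact hreach
      · rw [hh1, hh2]; exact hreach.symm
    · exact (deleteEdges_adj.mpr ⟨hxy, hmem⟩).reachable
  have hG'bip : (G.deleteEdges {s(u, v)}).Colorable 2 :=
    Colorable.mono_left (deleteEdges_le _) ⟨col⟩
  have hn1 : 1 ≤ n := by
    have := (Set.ncard_pos (Set.toFinite _)).mpr ⟨_, huvmem⟩
    omega
  have hG'count : edgeCount (G.deleteEdges {s(u, v)}) = n - 1 := by
    rw [edgeCount, Nat.card_coe_set_eq, edgeSet_deleteEdges,
      Set.ncard_diff_singleton_of_mem huvmem, hnn]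
  have hIH := IH (n - 1) (by omega) _ hG'conn hG'bip hG'count
  -- Step C : counting
  set A : Set (V × V × V × V) := {p | G.Adj p.1 p.2.1 ∧ G.Adj p.2.1 p.2.2.1 ∧
    G.Adj p.2.2.1 p.2.2.2 ∧ G.Adj p.2.2.2 p.1 ∧ p.1 ≠ p.2.2.1 ∧ p.2.1 ≠ p.2.2.2} with hA
  set A' : Set (V × V × V × V) := {p | (G.deleteEdges {s(u, v)}).Adj p.1 p.2.1 ∧
    (G.deleteEdges {s(u, v)}).Adj p.2.1 p.2.2.1 ∧
    (G.deleteEdges {s(u, v)}).Adj p.2.2.1 p.2.2.2 ∧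
    (G.deleteEdges {s(u, v)}).Adj p.2.2.2 p.1 ∧ p.1 ≠ p.2.2.1 ∧ p.2.1 ≠ p.2.2.2} with hA'
  have hgoal : Nat.card {p : V × V × V × V //
      G.Adj p.1 p.2.1 ∧ G.Adj p.2.1 p.2.2.1 ∧ G.Adj p.2.2.1 p.2.2.2 ∧ G.Adj p.2.2.2 p.1 ∧
      p.1 ≠ p.2.2.1 ∧ p.2.1 ≠ p.2.2.2} = A.ncard := Nat.card_coe_set_eq A
  have hA'le : A'.ncard ≤ 8 * ((n - 1) + 2 - Fintype.card V).choose 2 := by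
    rw [← Nat.card_coe_set_eq]; exact hIH
  have hsub : A' ⊆ A := by
    rintro ⟨a, b, c, d⟩ ⟨k1, k2, k3, k4, k5, k6⟩
    exact ⟨k1.1, k2.1, k3.1, k4.1, k5, k6⟩
  have hcover : A \ A' ⊆
      (fun q : V × V => ((u : V), v, q.1, q.2)) '' F ∪
      (fun q : V × V => (v, q.1, q.2, u)) '' F ∪
      (fun q : V × V => (q.1, q.2, u, v)) '' F ∪
      (fun q : V × V => (q.2, u, v, q.1)) '' F ∪
      (fun q : V × V => (u, q.2, q.1, v)) '' F ∪
      (fun q : V × V => (q.2, q.1, v, u)) '' F ∪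
      (fun q : V × V => (q.1, v, u, q.2)) '' F ∪
      (fun q : V × V => (v, u, q.2, q.1)) '' F := by
    rintro ⟨a, b, c, d⟩ ⟨hpA, hpA'⟩
    have hab : G.Adj a b := hpA.1
    have hbc : G.Adj b c := hpA.2.1
    have hcd : G.Adj c d := hpA.2.2.1
    have hda : G.Adj d a := hpA.2.2.2.1
    have hac : a ≠ c := hpA.2.2.2.2.1
    have hbd : b ≠ d := hpA.2.2.2.2.2
    have hfail : s(a, b) = s(u, v) ∨ s(b, c) = s(u, v) ∨ s(c, d) = s(u, v) ∨
        s(d, a) = s(u, v) := by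
      by_contra hcon
      push_neg at hcon
      exact hpA' ⟨deleteEdges_adj.mpr ⟨hab, by simpa using hcon.1⟩,
        deleteEdges_adj.mpr ⟨hbc, by simpa using hcon.2.1⟩,
        deleteEdges_adj.mpr ⟨hcd, by simpa using hcon.2.2.1⟩,
        deleteEdges_adj.mpr ⟨hda, by simpa using hcon.2.2.2⟩, hac, hbd⟩
    simp only [Set.mem_union]
    rcases hfail with hf | hf | hf | hf <;>
      rcases Sym2.eq_iff.mp hf with ⟨e1, e2⟩ | ⟨e1, e2⟩
    · have hm : (a, b, c, d) ∈ (fun q : V × V => ((u : V), v, q.1, q.2)) '' F := by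
        refine ⟨(c, d), ⟨?_, ?_, ?_, ?_, ?_⟩, ?_⟩
        · rw [← e2]; exact hbc
        · exact hcd
        · rw [← e1]; exact hda
        · rw [← e1]; exact Ne.symm hac
        · rw [← e2]; exact Ne.symm hbd
        · show ((u : V), v, c, d) = (a, b, c, d)
          rw [e1, e2]
      tauto
    · have hm : (a, b, c, d) ∈ (fun q : V × V => (v, u, q.2, q.1)) '' F := by
        refine ⟨(d, c), ⟨?_, ?_, ?_, ?_, ?_⟩, ?_⟩
        · rw [← e1]; exact hda.symm
        · exact hcd.symm
        · rw [← e2]; exact hbc.symm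
        · rw [← e2]; exact Ne.symm hbd
        · rw [← e1]; exact Ne.symm hac
        · show ((v : V), u, c, d) = (a, b, c, d)
          rw [e1, e2]
      tauto
    · have hm : (a, b, c, d) ∈ (fun q : V × V => (q.2, u, v, q.1)) '' F := by
        refine ⟨(d, a), ⟨?_, ?_, ?_, ?_, ?_⟩, ?_⟩
        · rw [← e2]; exact hcd
        · exact hda
        · rw [← e1]; exact hab
        · rw [← e1]; exact Ne.symm hbd
        · rw [← e2]; exact hac
        · show ((a : V), u, v, d) = (a, b, c, d)
          rw [e1, e2]
      tauto
    · have hm : (a, b, c, d) ∈ (fun q : V × V => (q.1, v, u, q.2)) '' F := by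
        refine ⟨(a, d), ⟨?_, ?_, ?_, ?_, ?_⟩, ?_⟩
        · rw [← e1]; exact hab.symm
        · exact hda.symm
        · rw [← e2]; exact hcd.symm
        · rw [← e2]; exact hac
        · rw [← e1]; exact Ne.symm hbd
        · show ((a : V), v, u, d) = (a, b, c, d)
          rw [e1, e2]
      tauto
    · have hm : (a, b, c, d) ∈ (fun q : V × V => (q.1, q.2, u, v)) '' F := by
        refine ⟨(a, b), ⟨?_, ?_, ?_, ?_, ?_⟩, ?_⟩
        · rw [← e2]; exact hda
        · exact hab
        · rw [← e1]; exact hbc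
        · rw [← e1]; exact hac
        · rw [← e2]; exact hbd
        · show ((a : V), b, u, v) = (a, b, c, d)
          rw [e1, e2]
      tauto
    · have hm : (a, b, c, d) ∈ (fun q : V × V => (q.2, q.1, v, u)) '' F := by
        refine ⟨(b, a), ⟨?_, ?_, ?_, ?_, ?_⟩, ?_⟩
        · rw [← e1]; exact hbc.symm
        · exact hab.symm
        · rw [← e2]; exact hda.symm
        · rw [← e2]; exact hbd
        · rw [← e1]; exact hac
        · show ((a : V), b, v, u) = (a, b, c, d)
          rw [e1, e2]
      tauto
    · have hm : (a, b, c, d) ∈ (fun q : V × V => (v, q.1, q.2, u)) '' F := by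
        refine ⟨(b, c), ⟨?_, ?_, ?_, ?_, ?_⟩, ?_⟩
        · rw [← e2]; exact hab
        · exact hbc
        · rw [← e1]; exact hcd
        · rw [← e1]; exact hbd
        · rw [← e2]; exact Ne.symm hac
        · show ((v : V), b, c, u) = (a, b, c, d)
          rw [e1, e2]
      tauto
    · have hm : (a, b, c, d) ∈ (fun q : V × V => (u, q.2, q.1, v)) '' F := by
        refine ⟨(c, b), ⟨?_, ?_, ?_, ?_, ?_⟩, ?_⟩
        · rw [← e1]; exact hcd.symm
        · exact hbc.symm
        · rw [← e2]; exact hab.symm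
        · rw [← e2]; exact Ne.symm hac
        · rw [← e1]; exact hbd
        · show ((u : V), b, c, v) = (a, b, c, d)
          rw [e1, e2]
      tauto
  have himg : ∀ f : V × V → V × V × V × V, (f '' F).ncard ≤ F.ncard :=
    fun f => Set.ncard_image_le (Set.toFinite _)
  have hstep : ∀ (s : Set (V × V × V × V)) (k : ℕ) (f : V × V → V × V × V × V),
      s.ncard ≤ k → (s ∪ f '' F).ncard ≤ k + F.ncard :=
    fun s k f hs => le_trans (Set.ncard_union_le _ _) (Nat.add_le_add hs (himg f))
  have hAA' : (A \ A').ncard ≤ 8 * F.ncard := by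
    have b0 := himg (fun q : V × V => ((u : V), v, q.1, q.2))
    have b1 := hstep _ _ (fun q : V × V => (v, q.1, q.2, u)) b0
    have b2 := hstep _ _ (fun q : V × V => (q.1, q.2, u, v)) b1
    have b3 := hstep _ _ (fun q : V × V => (q.2, u, v, q.1)) b2
    have b4 := hstep _ _ (fun q : V × V => (u, q.2, q.1, v)) b3
    have b5 := hstep _ _ (fun q : V × V => (q.2, q.1, v, u)) b4
    have b6 := hstep _ _ (fun q : V × V => (q.1, v, u, q.2)) b5
    have b7 := hstep _ _ (fun q : V × V => (v, u, q.2, q.1)) b6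
    have hle := Set.ncard_le_ncard hcover (Set.toFinite _)
    omega
  have hAle : A.ncard ≤ A'.ncard + (A \ A').ncard := by
    conv_lhs => rw [← Set.union_diff_cancel hsub]
    exact Set.ncard_union_le _ _
  have hidx : (n - 1) + 2 - Fintype.card V = n + 1 - Fintype.card V := by omega
  rw [hidx] at hA'le
  have hch : (n + 2 - Fintype.card V).choose 2
      = (n + 1 - Fintype.card V).choose 1 + (n + 1 - Fintype.card V).choose 2 := by
    have hx : n + 2 - Fintype.card V = (n + 1 - Fintype.card V) + 1 := by omega
    rw [hx, Nat.choose_succ_succ]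
  have hone : (n + 1 - Fintype.card V).choose 1 = n + 1 - Fintype.card V :=
    Nat.choose_one_right _
  rw [hgoal, hch, hone]
  omega

end C4Helpers

/-- Every connected bipartite graph `G` with `d` vertices and `e`
edges satisfies `c₄(G) ≤ C(e-d+2, 2)`. -/
theorem c4_bipartite_binom [Fintype V] (G : SimpleGraph V) (hconn : G.Connected)
    (hbip : G.Colorable 2) (d e : ℕ) (hd : d = Fintype.card V) (he : e = edgeCount G) :
    c4 G ≤ Nat.choose (e + 2 - d) 2 := by
  subst hd he
  have h := key (edgeCount G) G hconn hbip rfl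
  exact le_trans (Nat.div_le_div_right h)
    (le_of_eq (Nat.mul_div_cancel_left _ (by norm_num)))
end

section
/- Let G be a connected graph on d ≥ 4 vertices containing K_{d-1} as a subgraph, with e = C(d-1,2) + k edges where 1 ≤ k ≤ d-2. Then C(e-d+1,2) − c_4(G) = (d-4)(k-1)(d-1-k)/2 ≥ 0; in particular c_4(G) ≤ C(e-d+1,2), with equality if and only if d = 4 or k = 1. -/
open SimpleGraph

variable {V : Type*}

section auxcount

variable {α β : Type*} [Fintype α] [Fintype β]

lemma aux_card_filter_prod (p : α → Prop) (q : α → β → Prop)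
    [DecidablePred p] [∀ a, DecidablePred (q a)] :
    ((Finset.univ : Finset (α × β)).filter fun x => p x.1 ∧ q x.1 x.2).card
      = ∑ a ∈ Finset.univ.filter p, (Finset.univ.filter (q a)).card := by
  rw [Finset.card_filter, ← Finset.univ_product_univ, Finset.sum_product, Finset.sum_filter]
  refine Finset.sum_congr rfl fun a _ => ?_
  by_cases h : p a
  · simp only [h, true_and, Finset.card_filter, if_true]
  · simp only [h, false_and, if_false, Finset.sum_const_zero]

lemma aux_card_filter_equiv (e : α ≃ β) (p : β → Prop) [DecidablePred p] :
    ((Finset.univ : Finset α).filter fun a => p (e a)).card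
      = ((Finset.univ : Finset β).filter p).card := by
  classical
  rw [← Fintype.card_subtype, ← Fintype.card_subtype]
  exact Fintype.card_congr (e.subtypeEquiv (fun a => Iff.rfl))

variable [DecidableEq α]

lemma aux_card_filter_ne1 (v : α) :
    ((Finset.univ : Finset α).filter fun z => z ≠ v).card = Fintype.card α - 1 := by
  have h : (Finset.univ.filter fun z => z ≠ v) = ({v} : Finset α)ᶜ := by
    ext z; simp
  rw [h, Finset.card_compl, Finset.card_singleton]

lemma aux_card_filter_ne2 (v a : α) (hav : a ≠ v) :
    ((Finset.univ : Finset α).filter fun z => z ≠ v ∧ z ≠ a).card = Fintype.card α - 2 := by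
  have h : (Finset.univ.filter fun z => z ≠ v ∧ z ≠ a) = ({v, a} : Finset α)ᶜ := by
    ext z; simp [not_or]
  rw [h, Finset.card_compl, Finset.card_insert_of_notMem (by simpa using hav.symm),
    Finset.card_singleton]

lemma aux_card_filter_ne3 (v a b : α) (hav : a ≠ v) (hbv : b ≠ v) (hba : b ≠ a) :
    ((Finset.univ : Finset α).filter fun z => z ≠ v ∧ z ≠ a ∧ z ≠ b).card
      = Fintype.card α - 3 := by
  have h : (Finset.univ.filter fun z => z ≠ v ∧ z ≠ a ∧ z ≠ b) = ({v, a, b} : Finset α)ᶜ := by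
    ext z; simp [not_or]
  rw [h, Finset.card_compl]
  rw [Finset.card_insert_of_notMem (by simp [hav.symm, hbv.symm]),
    Finset.card_insert_of_notMem (by simpa using hba.symm), Finset.card_singleton]

lemma aux_card_filter_ne4 (v a b c : α) (hav : a ≠ v) (hbv : b ≠ v) (hcv : c ≠ v)
    (hba : b ≠ a) (hca : c ≠ a) (hcb : c ≠ b) :
    ((Finset.univ : Finset α).filter fun z => z ≠ v ∧ z ≠ a ∧ z ≠ b ∧ z ≠ c).card
      = Fintype.card α - 4 := by
  have h : (Finset.univ.filter fun z => z ≠ v ∧ z ≠ a ∧ z ≠ b ∧ z ≠ c)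
      = ({v, a, b, c} : Finset α)ᶜ := by
    ext z; simp [not_or]
  rw [h, Finset.card_compl]
  rw [Finset.card_insert_of_notMem (by simp [hav.symm, hbv.symm, hcv.symm]),
    Finset.card_insert_of_notMem (by simp [hba.symm, hca.symm]),
    Finset.card_insert_of_notMem (by simpa using hcb.symm), Finset.card_singleton]

end auxcount

section auxq

variable [Fintype V] [DecidableEq V]

lemma aux_cardQzero (v : V) :
    ((Finset.univ : Finset (V × V × V × V)).filter fun p =>
        p.1 ≠ v ∧ ((p.2.1 ≠ v ∧ p.2.1 ≠ p.1) ∧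
          ((p.2.2.1 ≠ v ∧ p.2.2.1 ≠ p.1 ∧ p.2.2.1 ≠ p.2.1) ∧
           (p.2.2.2 ≠ v ∧ p.2.2.2 ≠ p.1 ∧ p.2.2.2 ≠ p.2.1 ∧ p.2.2.2 ≠ p.2.2.1)))).card
      = (Fintype.card V - 1) * ((Fintype.card V - 2) * ((Fintype.card V - 3) *
          (Fintype.card V - 4))) := by
  classical
  calc ((Finset.univ : Finset (V × V × V × V)).filter fun p =>
        p.1 ≠ v ∧ ((p.2.1 ≠ v ∧ p.2.1 ≠ p.1) ∧
          ((p.2.2.1 ≠ v ∧ p.2.2.1 ≠ p.1 ∧ p.2.2.1 ≠ p.2.1) ∧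
           (p.2.2.2 ≠ v ∧ p.2.2.2 ≠ p.1 ∧ p.2.2.2 ≠ p.2.1 ∧ p.2.2.2 ≠ p.2.2.1)))).card
      = ∑ a ∈ Finset.univ.filter (fun a : V => a ≠ v),
          (Finset.univ.filter fun w : V × V × V =>
            (w.1 ≠ v ∧ w.1 ≠ a) ∧
              ((w.2.1 ≠ v ∧ w.2.1 ≠ a ∧ w.2.1 ≠ w.1) ∧
               (w.2.2 ≠ v ∧ w.2.2 ≠ a ∧ w.2.2 ≠ w.1 ∧ w.2.2 ≠ w.2.1))).card :=
        aux_card_filter_prod (fun a : V => a ≠ v)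
          (fun a (w : V × V × V) => (w.1 ≠ v ∧ w.1 ≠ a) ∧
            ((w.2.1 ≠ v ∧ w.2.1 ≠ a ∧ w.2.1 ≠ w.1) ∧
             (w.2.2 ≠ v ∧ w.2.2 ≠ a ∧ w.2.2 ≠ w.1 ∧ w.2.2 ≠ w.2.1)))
    _ = ∑ a ∈ Finset.univ.filter (fun a : V => a ≠ v),
          (Fintype.card V - 2) * ((Fintype.card V - 3) * (Fintype.card V - 4)) := by
        refine Finset.sum_congr rfl fun a ha => ?_
        rw [Finset.mem_filter] at ha
        calc (Finset.univ.filter fun w : V × V × V =>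
            (w.1 ≠ v ∧ w.1 ≠ a) ∧
              ((w.2.1 ≠ v ∧ w.2.1 ≠ a ∧ w.2.1 ≠ w.1) ∧
               (w.2.2 ≠ v ∧ w.2.2 ≠ a ∧ w.2.2 ≠ w.1 ∧ w.2.2 ≠ w.2.1))).card
            = ∑ b ∈ Finset.univ.filter (fun b : V => b ≠ v ∧ b ≠ a),
                (Finset.univ.filter fun u : V × V =>
                  (u.1 ≠ v ∧ u.1 ≠ a ∧ u.1 ≠ b) ∧
                  (u.2 ≠ v ∧ u.2 ≠ a ∧ u.2 ≠ b ∧ u.2 ≠ u.1)).card :=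
              aux_card_filter_prod (fun b : V => b ≠ v ∧ b ≠ a)
                (fun b (u : V × V) => (u.1 ≠ v ∧ u.1 ≠ a ∧ u.1 ≠ b) ∧
                  (u.2 ≠ v ∧ u.2 ≠ a ∧ u.2 ≠ b ∧ u.2 ≠ u.1))
          _ = ∑ b ∈ Finset.univ.filter (fun b : V => b ≠ v ∧ b ≠ a),
                ((Fintype.card V - 3) * (Fintype.card V - 4)) := by
              refine Finset.sum_congr rfl fun b hb => ?_
              rw [Finset.mem_filter] at hb
              calc (Finset.univ.filter fun u : V × V =>
                  (u.1 ≠ v ∧ u.1 ≠ a ∧ u.1 ≠ b) ∧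
                  (u.2 ≠ v ∧ u.2 ≠ a ∧ u.2 ≠ b ∧ u.2 ≠ u.1)).card
                  = ∑ c ∈ Finset.univ.filter (fun c : V => c ≠ v ∧ c ≠ a ∧ c ≠ b),
                      (Finset.univ.filter fun z : V =>
                        z ≠ v ∧ z ≠ a ∧ z ≠ b ∧ z ≠ c).card :=
                    aux_card_filter_prod (fun c : V => c ≠ v ∧ c ≠ a ∧ c ≠ b)
                      (fun c (z : V) => z ≠ v ∧ z ≠ a ∧ z ≠ b ∧ z ≠ c)
                _ = ∑ c ∈ Finset.univ.filter (fun c : V => c ≠ v ∧ c ≠ a ∧ c ≠ b),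
                      (Fintype.card V - 4) := by
                    refine Finset.sum_congr rfl fun c hc => ?_
                    rw [Finset.mem_filter] at hc
                    exact aux_card_filter_ne4 v a b c ha.2 hb.2.1 hc.2.1 hb.2.2 hc.2.2.1 hc.2.2.2
                _ = (Fintype.card V - 3) * (Fintype.card V - 4) := by
                    rw [Finset.sum_const, aux_card_filter_ne3 v a b ha.2 hb.2.1 hb.2.2,
                      smul_eq_mul]
          _ = (Fintype.card V - 2) * ((Fintype.card V - 3) * (Fintype.card V - 4)) := by
              rw [Finset.sum_const, aux_card_filter_ne2 v a ha.2, smul_eq_mul]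
    _ = (Fintype.card V - 1) * ((Fintype.card V - 2) * ((Fintype.card V - 3) *
          (Fintype.card V - 4))) := by
        rw [Finset.sum_const, aux_card_filter_ne1 v, smul_eq_mul]

lemma aux_cardQone (v : V) (N : Finset V) (hvN : v ∉ N) :
    ((Finset.univ : Finset (V × V × V × V)).filter fun p =>
        p.1 = v ∧ (p.2.1 ∈ N ∧ ((p.2.2.1 ∈ N ∧ p.2.2.1 ≠ p.2.1) ∧
          (p.2.2.2 ≠ v ∧ p.2.2.2 ≠ p.2.1 ∧ p.2.2.2 ≠ p.2.2.1)))).card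
      = N.card * ((N.card - 1) * (Fintype.card V - 3)) := by
  classical
  have hNv : ∀ x, x ∈ N → x ≠ v := fun x hx hxv => hvN (hxv ▸ hx)
  calc ((Finset.univ : Finset (V × V × V × V)).filter fun p =>
        p.1 = v ∧ (p.2.1 ∈ N ∧ ((p.2.2.1 ∈ N ∧ p.2.2.1 ≠ p.2.1) ∧
          (p.2.2.2 ≠ v ∧ p.2.2.2 ≠ p.2.1 ∧ p.2.2.2 ≠ p.2.2.1)))).card
      = ∑ x ∈ Finset.univ.filter (fun x : V => x = v),
          (Finset.univ.filter fun w : V × V × V =>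
            w.1 ∈ N ∧ ((w.2.1 ∈ N ∧ w.2.1 ≠ w.1) ∧
              (w.2.2 ≠ v ∧ w.2.2 ≠ w.1 ∧ w.2.2 ≠ w.2.1))).card :=
        aux_card_filter_prod (fun x : V => x = v)
          (fun _ (w : V × V × V) => w.1 ∈ N ∧ ((w.2.1 ∈ N ∧ w.2.1 ≠ w.1) ∧
            (w.2.2 ≠ v ∧ w.2.2 ≠ w.1 ∧ w.2.2 ≠ w.2.1)))
    _ = (Finset.univ.filter fun w : V × V × V =>
            w.1 ∈ N ∧ ((w.2.1 ∈ N ∧ w.2.1 ≠ w.1) ∧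
              (w.2.2 ≠ v ∧ w.2.2 ≠ w.1 ∧ w.2.2 ≠ w.2.1))).card := by
        have hfv : Finset.univ.filter (fun x : V => x = v) = {v} := by ext x; simp
        rw [hfv, Finset.sum_singleton]
    _ = ∑ y ∈ Finset.univ.filter (fun y : V => y ∈ N),
          (Finset.univ.filter fun u : V × V =>
            (u.1 ∈ N ∧ u.1 ≠ y) ∧ (u.2 ≠ v ∧ u.2 ≠ y ∧ u.2 ≠ u.1)).card :=
        aux_card_filter_prod (fun y : V => y ∈ N)
          (fun y (u : V × V) => (u.1 ∈ N ∧ u.1 ≠ y) ∧ (u.2 ≠ v ∧ u.2 ≠ y ∧ u.2 ≠ u.1))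
    _ = ∑ y ∈ Finset.univ.filter (fun y : V => y ∈ N),
          ((N.card - 1) * (Fintype.card V - 3)) := by
        refine Finset.sum_congr rfl fun y hy => ?_
        rw [Finset.mem_filter] at hy
        calc (Finset.univ.filter fun u : V × V =>
              (u.1 ∈ N ∧ u.1 ≠ y) ∧ (u.2 ≠ v ∧ u.2 ≠ y ∧ u.2 ≠ u.1)).card
            = ∑ z ∈ Finset.univ.filter (fun z : V => z ∈ N ∧ z ≠ y),
                (Finset.univ.filter fun u : V => u ≠ v ∧ u ≠ y ∧ u ≠ z).card :=
              aux_card_filter_prod (fun z : V => z ∈ N ∧ z ≠ y)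
                (fun z (u : V) => u ≠ v ∧ u ≠ y ∧ u ≠ z)
          _ = ∑ z ∈ Finset.univ.filter (fun z : V => z ∈ N ∧ z ≠ y),
                (Fintype.card V - 3) := by
              refine Finset.sum_congr rfl fun z hz => ?_
              rw [Finset.mem_filter] at hz
              exact aux_card_filter_ne3 v y z (hNv y hy.2) (hNv z hz.2.1) hz.2.2
          _ = (N.card - 1) * (Fintype.card V - 3) := by
              have herase : Finset.univ.filter (fun z : V => z ∈ N ∧ z ≠ y) = N.erase y := by
                ext z; simp [Finset.mem_erase, and_comm]
              rw [Finset.sum_const, herase, Finset.card_erase_of_mem hy.2, smul_eq_mul]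
    _ = N.card * ((N.card - 1) * (Fintype.card V - 3)) := by
        have hfN : Finset.univ.filter (fun y : V => y ∈ N) = N := by ext y; simp
        rw [Finset.sum_const, hfN, smul_eq_mul]

end auxq

lemma aux_two_choose_two (n : ℕ) : 2 * n.choose 2 = n * (n - 1) := by
  have h2 : 2 ∣ n * (n - 1) := by
    cases n with
    | zero => simp
    | succ m => simpa [Nat.succ_sub_one, Nat.mul_comm] using (Nat.even_mul_succ_self m).two_dvd
  rw [Nat.choose_two_right, Nat.mul_div_cancel' h2]

lemma aux_24_choose_4 (n : ℕ) : 24 * n.choose 4 = n * (n - 1) * (n - 2) * (n - 3) := by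
  have h := Nat.descFactorial_eq_factorial_mul_choose n 4
  have hd : n.descFactorial 4 = (n - 3) * ((n - 2) * ((n - 1) * n)) := by
    simp [Nat.descFactorial]
  have h24 : Nat.factorial 4 = 24 := by decide
  rw [hd, h24] at h
  rw [← h]; ring

set_option maxHeartbeats 1000000 in
lemma aux_key {V : Type*} (v : V) (N : Finset V) (hvN : v ∉ N)
    (A : V → V → Prop)
    (hadj : ∀ x y : V, A x y ↔
      ((x ≠ y ∧ x ≠ v ∧ y ≠ v) ∨ (x = v ∧ y ∈ N) ∨ (y = v ∧ x ∈ N)))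
    (a b c dd : V) :
    (A a b ∧ A b c ∧ A c dd ∧ A dd a ∧ a ≠ c ∧ b ≠ dd) ↔
      ((a ≠ v ∧ ((b ≠ v ∧ b ≠ a) ∧ ((c ≠ v ∧ c ≠ a ∧ c ≠ b) ∧
          (dd ≠ v ∧ dd ≠ a ∧ dd ≠ b ∧ dd ≠ c))))
       ∨ (a = v ∧ (b ∈ N ∧ ((dd ∈ N ∧ dd ≠ b) ∧ (c ≠ v ∧ c ≠ b ∧ c ≠ dd))))
       ∨ (b = v ∧ (a ∈ N ∧ ((c ∈ N ∧ c ≠ a) ∧ (dd ≠ v ∧ dd ≠ a ∧ dd ≠ c))))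
       ∨ (c = v ∧ (b ∈ N ∧ ((dd ∈ N ∧ dd ≠ b) ∧ (a ≠ v ∧ a ≠ b ∧ a ≠ dd))))
       ∨ (dd = v ∧ (a ∈ N ∧ ((c ∈ N ∧ c ≠ a) ∧ (b ≠ v ∧ b ≠ a ∧ b ≠ c))))) := by
  have hNa := fun (h : a ∈ N) (h2 : a = v) => hvN (h2 ▸ h)
  have hNb := fun (h : b ∈ N) (h2 : b = v) => hvN (h2 ▸ h)
  have hNc := fun (h : c ∈ N) (h2 : c = v) => hvN (h2 ▸ h)
  have hNd := fun (h : dd ∈ N) (h2 : dd = v) => hvN (h2 ▸ h)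
  simp only [hadj]
  by_cases ha : a = v <;> by_cases hb : b = v <;> by_cases hc : c = v <;>
    by_cases hd2 : dd = v <;> simp_all <;> tauto

set_option maxHeartbeats 3000000 in
/-- For a connected graph `G` on `d ≥ 4` vertices containing
`K_{d-1}`, with `e = C(d-1,2) + k` edges, `1 ≤ k ≤ d-2`, one has
`C(e-d+1,2) − c₄(G) = (d-4)(k-1)(d-1-k)/2 ≥ 0`; in particular
`c₄(G) ≤ C(e-d+1,2)`, with equality iff `d = 4` or `k = 1`. -/
theorem c4_large_clique [Fintype V] (G : SimpleGraph V) (hconn : G.Connected)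
    (d e k : ℕ) (hd : d = Fintype.card V) (hd4 : 4 ≤ d)
    (hclique : ∃ s : Finset V, G.IsNClique (d - 1) s)
    (he : e = edgeCount G) (hek : e = Nat.choose (d - 1) 2 + k)
    (hk1 : 1 ≤ k) (hk2 : k ≤ d - 2) :
    (Nat.choose (e + 1 - d) 2 : ℚ) - c4 G =
      ((d : ℚ) - 4) * ((k : ℚ) - 1) * ((d : ℚ) - 1 - k) / 2 ∧
    0 ≤ ((d : ℚ) - 4) * ((k : ℚ) - 1) * ((d : ℚ) - 1 - k) / 2 ∧
    c4 G ≤ Nat.choose (e + 1 - d) 2 ∧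
    (c4 G = Nat.choose (e + 1 - d) 2 ↔ d = 4 ∨ k = 1) := by
  classical
  obtain ⟨s, hs⟩ := hclique
  have hscard : s.card = d - 1 := hs.2
  have hcompl : (sᶜ : Finset V).card = 1 := by
    rw [Finset.card_compl, hscard, ← hd]; omega
  obtain ⟨v, hv⟩ := Finset.card_eq_one.mp hcompl
  have hvs : v ∉ s := by
    have hvm : v ∈ sᶜ := by rw [hv]; exact Finset.mem_singleton_self v
    exact Finset.mem_compl.mp hvm
  have hmem : ∀ x : V, x ∈ s ↔ x ≠ v := by
    intro x
    constructor
    · intro hx hxv; exact hvs (hxv ▸ hx)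
    · intro hx
      by_contra h
      have hxc : x ∈ sᶜ := Finset.mem_compl.mpr h
      rw [hv, Finset.mem_singleton] at hxc
      exact hx hxc
  have hvN : v ∉ G.neighborFinset v := by simp
  have hadjN : ∀ x, x ∈ G.neighborFinset v ↔ G.Adj v x := fun x => by simp
  set N : Finset V := G.neighborFinset v with hNdef
  have hNv : ∀ x, x ∈ N → x ≠ v := fun x hx hxv => hvN (hxv ▸ hx)
  have hadj : ∀ x y : V, G.Adj x y ↔
      ((x ≠ y ∧ x ≠ v ∧ y ≠ v) ∨ (x = v ∧ y ∈ N) ∨ (y = v ∧ x ∈ N)) := by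
    intro x y
    constructor
    · intro h
      by_cases hx : x = v
      · subst hx; exact Or.inr (Or.inl ⟨rfl, (hadjN y).mpr h⟩)
      · by_cases hy : y = v
        · subst hy; exact Or.inr (Or.inr ⟨rfl, (hadjN x).mpr h.symm⟩)
        · exact Or.inl ⟨h.ne, hx, hy⟩
    · rintro (⟨hne, hx, hy⟩ | ⟨rfl, hy⟩ | ⟨rfl, hx⟩)
      · exact hs.1 (Finset.mem_coe.mpr ((hmem x).mpr hx)) (Finset.mem_coe.mpr ((hmem y).mpr hy)) hne
      · exact (hadjN y).mp hy
      · exact ((hadjN x).mp hx).symm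
  -- edge count
  have heF : e = G.edgeFinset.card := by
    rw [he]
    unfold edgeCount
    rw [Nat.card_eq_fintype_card]
    exact (Set.toFinset_card _).symm
  have h2e : 2 * G.edgeFinset.card
      = ((Finset.univ : Finset (V × V)).filter fun p => G.Adj p.1 p.2).card := by
    rw [SimpleGraph.two_mul_card_edgeFinset]
  have hsplit2 : ((Finset.univ : Finset (V × V)).filter fun p => G.Adj p.1 p.2)
      = ((Finset.univ.filter fun p : V × V => p.1 ≠ v ∧ (p.2 ≠ v ∧ p.2 ≠ p.1))
          ∪ Finset.univ.filter fun p : V × V => p.1 = v ∧ p.2 ∈ N)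
          ∪ Finset.univ.filter fun p : V × V => p.1 ∈ N ∧ p.2 = v := by
    ext p
    simp only [Finset.mem_filter, Finset.mem_union, Finset.mem_univ, true_and]
    rw [hadj]
    constructor
    · rintro (⟨h1, h2, h3⟩ | ⟨h1, h2⟩ | ⟨h1, h2⟩)
      · exact Or.inl (Or.inl ⟨h2, h3, fun hh => h1 hh.symm⟩)
      · exact Or.inl (Or.inr ⟨h1, h2⟩)
      · exact Or.inr ⟨h2, h1⟩
    · rintro ((⟨h1, h2, h3⟩ | ⟨h1, h2⟩) | ⟨h1, h2⟩)
      · exact Or.inl ⟨fun hh => h3 hh.symm, h1, h2⟩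
      · exact Or.inr (Or.inl ⟨h1, h2⟩)
      · exact Or.inr (Or.inr ⟨h2, h1⟩)
  have hcardA : (Finset.univ.filter fun p : V × V => p.1 ≠ v ∧ (p.2 ≠ v ∧ p.2 ≠ p.1)).card
      = (Fintype.card V - 1) * (Fintype.card V - 2) := by
    calc (Finset.univ.filter fun p : V × V => p.1 ≠ v ∧ (p.2 ≠ v ∧ p.2 ≠ p.1)).card
        = ∑ a ∈ Finset.univ.filter (fun a : V => a ≠ v),
            (Finset.univ.filter fun z : V => z ≠ v ∧ z ≠ a).card :=
          aux_card_filter_prod (fun a : V => a ≠ v) (fun a (z : V) => z ≠ v ∧ z ≠ a)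
      _ = ∑ a ∈ Finset.univ.filter (fun a : V => a ≠ v), (Fintype.card V - 2) := by
          refine Finset.sum_congr rfl fun a ha => ?_
          rw [Finset.mem_filter] at ha
          exact aux_card_filter_ne2 v a ha.2
      _ = (Fintype.card V - 1) * (Fintype.card V - 2) := by
          rw [Finset.sum_const, aux_card_filter_ne1 v, smul_eq_mul]
  have hcardB : (Finset.univ.filter fun p : V × V => p.1 = v ∧ p.2 ∈ N).card = N.card := by
    calc (Finset.univ.filter fun p : V × V => p.1 = v ∧ p.2 ∈ N).card
        = ∑ a ∈ Finset.univ.filter (fun a : V => a = v),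
            (Finset.univ.filter fun z : V => z ∈ N).card :=
          aux_card_filter_prod (fun a : V => a = v) (fun _ (z : V) => z ∈ N)
      _ = N.card := by
          have h1 : Finset.univ.filter (fun a : V => a = v) = {v} := by ext x; simp
          have h2 : Finset.univ.filter (fun z : V => z ∈ N) = N := by ext x; simp
          rw [h1, Finset.sum_singleton, h2]
  have hcardC : (Finset.univ.filter fun p : V × V => p.1 ∈ N ∧ p.2 = v).card = N.card := by
    calc (Finset.univ.filter fun p : V × V => p.1 ∈ N ∧ p.2 = v).card
        = ∑ a ∈ Finset.univ.filter (fun a : V => a ∈ N),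
            (Finset.univ.filter fun z : V => z = v).card :=
          aux_card_filter_prod (fun a : V => a ∈ N) (fun _ (z : V) => z = v)
      _ = N.card := by
          have h1 : Finset.univ.filter (fun z : V => z = v) = {v} := by ext x; simp
          have h2 : Finset.univ.filter (fun a : V => a ∈ N) = N := by ext x; simp
          rw [h1, h2]
          simp
  have hdAB : Disjoint (Finset.univ.filter fun p : V × V => p.1 ≠ v ∧ (p.2 ≠ v ∧ p.2 ≠ p.1))
      (Finset.univ.filter fun p : V × V => p.1 = v ∧ p.2 ∈ N) :=
    Finset.disjoint_left.mpr (by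
      intro p hp hq
      rw [Finset.mem_filter] at hp hq
      exact absurd hq.2.1 hp.2.1)
  have hdABC : Disjoint ((Finset.univ.filter fun p : V × V => p.1 ≠ v ∧ (p.2 ≠ v ∧ p.2 ≠ p.1))
      ∪ Finset.univ.filter fun p : V × V => p.1 = v ∧ p.2 ∈ N)
      (Finset.univ.filter fun p : V × V => p.1 ∈ N ∧ p.2 = v) := by
    rw [Finset.disjoint_union_left]
    constructor
    · exact Finset.disjoint_left.mpr (by
        intro p hp hq
        rw [Finset.mem_filter] at hp hq
        exact absurd hq.2.2 hp.2.2.1)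
    · exact Finset.disjoint_left.mpr (by
        intro p hp hq
        rw [Finset.mem_filter] at hp hq
        exact hNv _ hq.2.1 hp.2.1)
  have hNcard : N.card = k := by
    have h1 : 2 * e = ((Finset.univ : Finset (V × V)).filter fun p => G.Adj p.1 p.2).card := by
      rw [heF, h2e]
    rw [hsplit2, Finset.card_union_of_disjoint hdABC, Finset.card_union_of_disjoint hdAB,
      hcardA, hcardB, hcardC, ← hd, hek] at h1
    have h2 : 2 * Nat.choose (d - 1) 2 = (d - 1) * (d - 2) := by
      have h3 := aux_two_choose_two (d - 1)
      have e1 : d - 1 - 1 = d - 2 := by omega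
      rw [e1] at h3
      exact h3
    rw [← h2] at h1
    omega
  -- the five pieces of the 4-cycle count
  have hsplit4 : ((Finset.univ : Finset (V × V × V × V)).filter fun p =>
      G.Adj p.1 p.2.1 ∧ G.Adj p.2.1 p.2.2.1 ∧ G.Adj p.2.2.1 p.2.2.2 ∧ G.Adj p.2.2.2 p.1 ∧
        p.1 ≠ p.2.2.1 ∧ p.2.1 ≠ p.2.2.2)
      = ((((Finset.univ.filter fun p : V × V × V × V =>
          p.1 ≠ v ∧ ((p.2.1 ≠ v ∧ p.2.1 ≠ p.1) ∧
            ((p.2.2.1 ≠ v ∧ p.2.2.1 ≠ p.1 ∧ p.2.2.1 ≠ p.2.1) ∧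
             (p.2.2.2 ≠ v ∧ p.2.2.2 ≠ p.1 ∧ p.2.2.2 ≠ p.2.1 ∧ p.2.2.2 ≠ p.2.2.1))))
        ∪ Finset.univ.filter fun p : V × V × V × V =>
          p.1 = v ∧ (p.2.1 ∈ N ∧ ((p.2.2.2 ∈ N ∧ p.2.2.2 ≠ p.2.1) ∧
            (p.2.2.1 ≠ v ∧ p.2.2.1 ≠ p.2.1 ∧ p.2.2.1 ≠ p.2.2.2))))
        ∪ Finset.univ.filter fun p : V × V × V × V =>
          p.2.1 = v ∧ (p.1 ∈ N ∧ ((p.2.2.1 ∈ N ∧ p.2.2.1 ≠ p.1) ∧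
            (p.2.2.2 ≠ v ∧ p.2.2.2 ≠ p.1 ∧ p.2.2.2 ≠ p.2.2.1))))
        ∪ Finset.univ.filter fun p : V × V × V × V =>
          p.2.2.1 = v ∧ (p.2.1 ∈ N ∧ ((p.2.2.2 ∈ N ∧ p.2.2.2 ≠ p.2.1) ∧
            (p.1 ≠ v ∧ p.1 ≠ p.2.1 ∧ p.1 ≠ p.2.2.2))))
        ∪ Finset.univ.filter fun p : V × V × V × V =>
          p.2.2.2 = v ∧ (p.1 ∈ N ∧ ((p.2.2.1 ∈ N ∧ p.2.2.1 ≠ p.1) ∧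
            (p.2.1 ≠ v ∧ p.2.1 ≠ p.1 ∧ p.2.1 ≠ p.2.2.1))) := by
    ext p
    obtain ⟨a, b, c, dd⟩ := p
    simp only [Finset.mem_filter, Finset.mem_union, Finset.mem_univ, true_and, or_assoc]
    exact aux_key v N hvN G.Adj hadj a b c dd
  -- cardinalities of the five pieces
  have hcF0 : (Finset.univ.filter fun p : V × V × V × V =>
      p.1 ≠ v ∧ ((p.2.1 ≠ v ∧ p.2.1 ≠ p.1) ∧
        ((p.2.2.1 ≠ v ∧ p.2.2.1 ≠ p.1 ∧ p.2.2.1 ≠ p.2.1) ∧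
         (p.2.2.2 ≠ v ∧ p.2.2.2 ≠ p.1 ∧ p.2.2.2 ≠ p.2.1 ∧ p.2.2.2 ≠ p.2.2.1)))).card
      = (Fintype.card V - 1) * ((Fintype.card V - 2) * ((Fintype.card V - 3) *
          (Fintype.card V - 4))) := aux_cardQzero v
  have hcF1 : (Finset.univ.filter fun p : V × V × V × V =>
      p.1 = v ∧ (p.2.1 ∈ N ∧ ((p.2.2.2 ∈ N ∧ p.2.2.2 ≠ p.2.1) ∧
        (p.2.2.1 ≠ v ∧ p.2.2.1 ≠ p.2.1 ∧ p.2.2.1 ≠ p.2.2.2)))).card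
      = N.card * ((N.card - 1) * (Fintype.card V - 3)) :=
    (aux_card_filter_equiv
      (⟨fun p : V × V × V × V => (p.1, p.2.1, p.2.2.2, p.2.2.1),
        fun p => (p.1, p.2.1, p.2.2.2, p.2.2.1), fun p => rfl, fun p => rfl⟩ :
          (V × V × V × V) ≃ (V × V × V × V))
      (fun w : V × V × V × V => w.1 = v ∧ (w.2.1 ∈ N ∧ ((w.2.2.1 ∈ N ∧ w.2.2.1 ≠ w.2.1) ∧
        (w.2.2.2 ≠ v ∧ w.2.2.2 ≠ w.2.1 ∧ w.2.2.2 ≠ w.2.2.1))))).trans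
      (aux_cardQone v N hvN)
  have hcF2 : (Finset.univ.filter fun p : V × V × V × V =>
      p.2.1 = v ∧ (p.1 ∈ N ∧ ((p.2.2.1 ∈ N ∧ p.2.2.1 ≠ p.1) ∧
        (p.2.2.2 ≠ v ∧ p.2.2.2 ≠ p.1 ∧ p.2.2.2 ≠ p.2.2.1)))).card
      = N.card * ((N.card - 1) * (Fintype.card V - 3)) :=
    (aux_card_filter_equiv
      (⟨fun p : V × V × V × V => (p.2.1, p.1, p.2.2.1, p.2.2.2),
        fun p => (p.2.1, p.1, p.2.2.1, p.2.2.2), fun p => rfl, fun p => rfl⟩ :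
          (V × V × V × V) ≃ (V × V × V × V))
      (fun w : V × V × V × V => w.1 = v ∧ (w.2.1 ∈ N ∧ ((w.2.2.1 ∈ N ∧ w.2.2.1 ≠ w.2.1) ∧
        (w.2.2.2 ≠ v ∧ w.2.2.2 ≠ w.2.1 ∧ w.2.2.2 ≠ w.2.2.1))))).trans
      (aux_cardQone v N hvN)
  have hcF3 : (Finset.univ.filter fun p : V × V × V × V =>
      p.2.2.1 = v ∧ (p.2.1 ∈ N ∧ ((p.2.2.2 ∈ N ∧ p.2.2.2 ≠ p.2.1) ∧
        (p.1 ≠ v ∧ p.1 ≠ p.2.1 ∧ p.1 ≠ p.2.2.2)))).card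
      = N.card * ((N.card - 1) * (Fintype.card V - 3)) :=
    (aux_card_filter_equiv
      (⟨fun p : V × V × V × V => (p.2.2.1, p.2.1, p.2.2.2, p.1),
        fun w => (w.2.2.2, w.2.1, w.1, w.2.2.1), fun p => rfl, fun p => rfl⟩ :
          (V × V × V × V) ≃ (V × V × V × V))
      (fun w : V × V × V × V => w.1 = v ∧ (w.2.1 ∈ N ∧ ((w.2.2.1 ∈ N ∧ w.2.2.1 ≠ w.2.1) ∧
        (w.2.2.2 ≠ v ∧ w.2.2.2 ≠ w.2.1 ∧ w.2.2.2 ≠ w.2.2.1))))).trans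
      (aux_cardQone v N hvN)
  have hcF4 : (Finset.univ.filter fun p : V × V × V × V =>
      p.2.2.2 = v ∧ (p.1 ∈ N ∧ ((p.2.2.1 ∈ N ∧ p.2.2.1 ≠ p.1) ∧
        (p.2.1 ≠ v ∧ p.2.1 ≠ p.1 ∧ p.2.1 ≠ p.2.2.1)))).card
      = N.card * ((N.card - 1) * (Fintype.card V - 3)) :=
    (aux_card_filter_equiv
      (⟨fun p : V × V × V × V => (p.2.2.2, p.1, p.2.2.1, p.2.1),
        fun w => (w.2.1, w.2.2.2, w.2.2.1, w.1), fun p => rfl, fun p => rfl⟩ :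
          (V × V × V × V) ≃ (V × V × V × V))
      (fun w : V × V × V × V => w.1 = v ∧ (w.2.1 ∈ N ∧ ((w.2.2.1 ∈ N ∧ w.2.2.1 ≠ w.2.1) ∧
        (w.2.2.2 ≠ v ∧ w.2.2.2 ≠ w.2.1 ∧ w.2.2.2 ≠ w.2.2.1))))).trans
      (aux_cardQone v N hvN)
  -- abbreviate the five sets
  set S0 := Finset.univ.filter fun p : V × V × V × V =>
      p.1 ≠ v ∧ ((p.2.1 ≠ v ∧ p.2.1 ≠ p.1) ∧
        ((p.2.2.1 ≠ v ∧ p.2.2.1 ≠ p.1 ∧ p.2.2.1 ≠ p.2.1) ∧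
         (p.2.2.2 ≠ v ∧ p.2.2.2 ≠ p.1 ∧ p.2.2.2 ≠ p.2.1 ∧ p.2.2.2 ≠ p.2.2.1))) with hS0
  set S1 := Finset.univ.filter fun p : V × V × V × V =>
      p.1 = v ∧ (p.2.1 ∈ N ∧ ((p.2.2.2 ∈ N ∧ p.2.2.2 ≠ p.2.1) ∧
        (p.2.2.1 ≠ v ∧ p.2.2.1 ≠ p.2.1 ∧ p.2.2.1 ≠ p.2.2.2))) with hS1
  set S2 := Finset.univ.filter fun p : V × V × V × V =>
      p.2.1 = v ∧ (p.1 ∈ N ∧ ((p.2.2.1 ∈ N ∧ p.2.2.1 ≠ p.1) ∧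
        (p.2.2.2 ≠ v ∧ p.2.2.2 ≠ p.1 ∧ p.2.2.2 ≠ p.2.2.1))) with hS2
  set S3 := Finset.univ.filter fun p : V × V × V × V =>
      p.2.2.1 = v ∧ (p.2.1 ∈ N ∧ ((p.2.2.2 ∈ N ∧ p.2.2.2 ≠ p.2.1) ∧
        (p.1 ≠ v ∧ p.1 ≠ p.2.1 ∧ p.1 ≠ p.2.2.2))) with hS3
  set S4 := Finset.univ.filter fun p : V × V × V × V =>
      p.2.2.2 = v ∧ (p.1 ∈ N ∧ ((p.2.2.1 ∈ N ∧ p.2.2.1 ≠ p.1) ∧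
        (p.2.1 ≠ v ∧ p.2.1 ≠ p.1 ∧ p.2.1 ≠ p.2.2.1))) with hS4
  -- pairwise disjointness
  have hd01 : Disjoint S0 S1 := Finset.disjoint_left.mpr (by
    intro p hp hq; rw [hS0, Finset.mem_filter] at hp; rw [hS1, Finset.mem_filter] at hq
    exact absurd hq.2.1 hp.2.1)
  have hd02 : Disjoint S0 S2 := Finset.disjoint_left.mpr (by
    intro p hp hq; rw [hS0, Finset.mem_filter] at hp; rw [hS2, Finset.mem_filter] at hq
    exact absurd hq.2.1 hp.2.2.1.1)
  have hd03 : Disjoint S0 S3 := Finset.disjoint_left.mpr (by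
    intro p hp hq; rw [hS0, Finset.mem_filter] at hp; rw [hS3, Finset.mem_filter] at hq
    exact absurd hq.2.1 hp.2.2.2.1.1)
  have hd04 : Disjoint S0 S4 := Finset.disjoint_left.mpr (by
    intro p hp hq; rw [hS0, Finset.mem_filter] at hp; rw [hS4, Finset.mem_filter] at hq
    exact absurd hq.2.1 hp.2.2.2.2.1)
  have hd12 : Disjoint S1 S2 := Finset.disjoint_left.mpr (by
    intro p hp hq; rw [hS1, Finset.mem_filter] at hp; rw [hS2, Finset.mem_filter] at hq
    exact hNv _ hp.2.2.1 hq.2.1)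
  have hd13 : Disjoint S1 S3 := Finset.disjoint_left.mpr (by
    intro p hp hq; rw [hS1, Finset.mem_filter] at hp; rw [hS3, Finset.mem_filter] at hq
    exact absurd hq.2.1 hp.2.2.2.2.1)
  have hd14 : Disjoint S1 S4 := Finset.disjoint_left.mpr (by
    intro p hp hq; rw [hS1, Finset.mem_filter] at hp; rw [hS4, Finset.mem_filter] at hq
    exact hNv _ hp.2.2.2.1.1 hq.2.1)
  have hd23 : Disjoint S2 S3 := Finset.disjoint_left.mpr (by
    intro p hp hq; rw [hS2, Finset.mem_filter] at hp; rw [hS3, Finset.mem_filter] at hq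
    exact hNv _ hp.2.2.2.1.1 hq.2.1)
  have hd24 : Disjoint S2 S4 := Finset.disjoint_left.mpr (by
    intro p hp hq; rw [hS2, Finset.mem_filter] at hp; rw [hS4, Finset.mem_filter] at hq
    exact absurd hq.2.1 hp.2.2.2.2.1)
  have hd34 : Disjoint S3 S4 := Finset.disjoint_left.mpr (by
    intro p hp hq; rw [hS3, Finset.mem_filter] at hp; rw [hS4, Finset.mem_filter] at hq
    exact hNv _ hp.2.2.2.1.1 hq.2.1)
  have hD2 : Disjoint (S0 ∪ S1) S2 := Finset.disjoint_union_left.mpr ⟨hd02, hd12⟩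
  have hD3 : Disjoint (S0 ∪ S1 ∪ S2) S3 :=
    Finset.disjoint_union_left.mpr ⟨Finset.disjoint_union_left.mpr ⟨hd03, hd13⟩, hd23⟩
  have hD4 : Disjoint (S0 ∪ S1 ∪ S2 ∪ S3) S4 :=
    Finset.disjoint_union_left.mpr ⟨Finset.disjoint_union_left.mpr
      ⟨Finset.disjoint_union_left.mpr ⟨hd04, hd14⟩, hd24⟩, hd34⟩
  -- total count
  have h8 : ((Finset.univ : Finset (V × V × V × V)).filter fun p =>
      G.Adj p.1 p.2.1 ∧ G.Adj p.2.1 p.2.2.1 ∧ G.Adj p.2.2.1 p.2.2.2 ∧ G.Adj p.2.2.2 p.1 ∧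
        p.1 ≠ p.2.2.1 ∧ p.2.1 ≠ p.2.2.2).card
      = 8 * (3 * Nat.choose (d - 1) 4 + (d - 3) * Nat.choose k 2) := by
    rw [hsplit4, Finset.card_union_of_disjoint hD4, Finset.card_union_of_disjoint hD3,
      Finset.card_union_of_disjoint hD2, Finset.card_union_of_disjoint hd01,
      hcF0, hcF1, hcF2, hcF3, hcF4, hNcard, ← hd]
    have hA := aux_24_choose_4 (d - 1)
    rw [(by omega : d - 1 - 1 = d - 2), (by omega : d - 1 - 2 = d - 3),
      (by omega : d - 1 - 3 = d - 4)] at hA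
    have hB := aux_two_choose_two k
    have h1 : (d - 1) * ((d - 2) * ((d - 3) * (d - 4))) = 24 * Nat.choose (d - 1) 4 := by
      rw [hA]; ring
    have h2 : k * ((k - 1) * (d - 3)) = (d - 3) * (2 * Nat.choose k 2) := by
      rw [hB]; ring
    rw [h1, h2]; ring
  have hc4val : c4 G = 3 * Nat.choose (d - 1) 4 + (d - 3) * Nat.choose k 2 := by
    have hc4card : c4 G = ((Finset.univ : Finset (V × V × V × V)).filter fun p =>
        G.Adj p.1 p.2.1 ∧ G.Adj p.2.1 p.2.2.1 ∧ G.Adj p.2.2.1 p.2.2.2 ∧ G.Adj p.2.2.2 p.1 ∧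
          p.1 ≠ p.2.2.1 ∧ p.2.1 ≠ p.2.2.2).card / 8 := by
      unfold c4
      rw [Nat.card_eq_fintype_card, Fintype.card_subtype]
    rw [hc4card, h8, Nat.mul_div_cancel_left _ (by norm_num : (0:ℕ) < 8)]
  -- rational arithmetic
  have hCge : d - 1 ≤ Nat.choose (d - 1) 2 := by
    have h2 := aux_two_choose_two (d - 1)
    rw [(by omega : d - 1 - 1 = d - 2)] at h2
    have hge : (d - 1) * 2 ≤ (d - 1) * (d - 2) := Nat.mul_le_mul_left _ (by omega)
    generalize hq : (d - 1) * (d - 2) = q at h2 hge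
    omega
  have hed : d ≤ e + 1 := by rw [hek]; omega
  have hm1 : 1 ≤ e + 1 - d := by rw [hek]; omega
  have hdQ : (4 : ℚ) ≤ (d : ℚ) := by exact_mod_cast hd4
  have hkQ : (1 : ℚ) ≤ (k : ℚ) := by exact_mod_cast hk1
  have hkdn : k + 2 ≤ d := by omega
  have hkdQ : (k : ℚ) + 2 ≤ (d : ℚ) := by exact_mod_cast hkdn
  have hc1 : ((d - 1 : ℕ) : ℚ) = (d : ℚ) - 1 := by rw [Nat.cast_sub (by omega)]; norm_num
  have hc2 : ((d - 2 : ℕ) : ℚ) = (d : ℚ) - 2 := by rw [Nat.cast_sub (by omega)]; norm_num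
  have hc3 : ((d - 3 : ℕ) : ℚ) = (d : ℚ) - 3 := by rw [Nat.cast_sub (by omega)]; norm_num
  have hc4' : ((d - 4 : ℕ) : ℚ) = (d : ℚ) - 4 := by rw [Nat.cast_sub (by omega)]; norm_num
  have hck1 : ((k - 1 : ℕ) : ℚ) = (k : ℚ) - 1 := by rw [Nat.cast_sub (by omega)]; norm_num
  have hCq4 : (Nat.choose (d - 1) 4 : ℚ)
      = ((d : ℚ) - 1) * ((d : ℚ) - 2) * ((d : ℚ) - 3) * ((d : ℚ) - 4) / 24 := by
    have hA := aux_24_choose_4 (d - 1)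
    rw [(by omega : d - 1 - 1 = d - 2), (by omega : d - 1 - 2 = d - 3),
      (by omega : d - 1 - 3 = d - 4)] at hA
    have hA' := congrArg (fun x : ℕ => (x : ℚ)) hA
    push_cast at hA'
    rw [hc1, hc2, hc3, hc4'] at hA'
    linarith
  have hCqk : (Nat.choose k 2 : ℚ) = (k : ℚ) * ((k : ℚ) - 1) / 2 := by
    have hB := aux_two_choose_two k
    have hB' := congrArg (fun x : ℕ => (x : ℚ)) hB
    push_cast at hB'
    rw [hck1] at hB'
    linarith
  have hCqd : (Nat.choose (d - 1) 2 : ℚ) = ((d : ℚ) - 1) * ((d : ℚ) - 2) / 2 := by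
    have hB := aux_two_choose_two (d - 1)
    rw [(by omega : d - 1 - 1 = d - 2)] at hB
    have hB' := congrArg (fun x : ℕ => (x : ℚ)) hB
    push_cast at hB'
    rw [hc1, hc2] at hB'
    linarith
  have hc4Q : (c4 G : ℚ)
      = 3 * (((d : ℚ) - 1) * ((d : ℚ) - 2) * ((d : ℚ) - 3) * ((d : ℚ) - 4) / 24)
        + ((d : ℚ) - 3) * ((k : ℚ) * ((k : ℚ) - 1) / 2) := by
    rw [hc4val]
    push_cast
    rw [hCq4, hCqk, hc3]
  have hmQ : ((e + 1 - d : ℕ) : ℚ)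
      = ((d : ℚ) - 1) * ((d : ℚ) - 2) / 2 + (k : ℚ) + 1 - (d : ℚ) := by
    rw [Nat.cast_sub hed]
    push_cast
    rw [hek]
    push_cast
    rw [hCqd]
  have hmQ1 : ((e + 1 - d - 1 : ℕ) : ℚ) = ((e + 1 - d : ℕ) : ℚ) - 1 := by
    rw [Nat.cast_sub hm1]; norm_num
  have hchooseM : (Nat.choose (e + 1 - d) 2 : ℚ)
      = ((e + 1 - d : ℕ) : ℚ) * (((e + 1 - d : ℕ) : ℚ) - 1) / 2 := by
    have hB := aux_two_choose_two (e + 1 - d)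
    have hB' := congrArg (fun x : ℕ => (x : ℚ)) hB
    push_cast at hB'
    rw [hmQ1] at hB'
    linarith
  have eq1 : (Nat.choose (e + 1 - d) 2 : ℚ) - c4 G =
      ((d : ℚ) - 4) * ((k : ℚ) - 1) * ((d : ℚ) - 1 - k) / 2 := by
    rw [hchooseM, hmQ, hc4Q]
    ring
  have hnonneg : 0 ≤ ((d : ℚ) - 4) * ((k : ℚ) - 1) * ((d : ℚ) - 1 - k) / 2 := by
    have h1 : (0 : ℚ) ≤ (d : ℚ) - 4 := by linarith
    have h2 : (0 : ℚ) ≤ (k : ℚ) - 1 := by linarith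
    have h3 : (0 : ℚ) ≤ (d : ℚ) - 1 - k := by linarith
    have := mul_nonneg (mul_nonneg h1 h2) h3
    linarith
  have hle : c4 G ≤ Nat.choose (e + 1 - d) 2 := by
    have : (c4 G : ℚ) ≤ (Nat.choose (e + 1 - d) 2 : ℚ) := by linarith
    exact_mod_cast this
  refine ⟨eq1, hnonneg, hle, ?_, ?_⟩
  · intro hEq
    have hEq' : (c4 G : ℚ) = (Nat.choose (e + 1 - d) 2 : ℚ) := by exact_mod_cast hEq
    have hprod : ((d : ℚ) - 4) * ((k : ℚ) - 1) * ((d : ℚ) - 1 - k) = 0 := by linarith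
    rcases mul_eq_zero.mp hprod with h | h
    · rcases mul_eq_zero.mp h with h' | h'
      · left
        have : (d : ℚ) = 4 := by linarith
        exact_mod_cast this
      · right
        have : (k : ℚ) = 1 := by linarith
        exact_mod_cast this
    · exfalso; linarith
  · intro h
    have hz : ((d : ℚ) - 4) * ((k : ℚ) - 1) * ((d : ℚ) - 1 - k) / 2 = 0 := by
      rcases h with rfl | rfl <;> norm_num
    have : (c4 G : ℚ) = (Nat.choose (e + 1 - d) 2 : ℚ) := by linarith
    exact_mod_cast this
end
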